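/- arXiv:1805.07245 — 3 statements merged into one kernel-verified Lean document; each statement's English description precedes it below -/
import Mathlib

section
/- Let X and Y be sets of n and m variables respectively and let l ≥ 0 be an integer. Then LS_{⟨(m+l)^n⟩}(−X; Y) = (∏_{x∈X}(−x))^l · ∏_{x∈X, y∈Y} (y − x). -/
open MvPolynomial

/-- The ring of symmetric functions, realized as the polynomial ring
`ℚ[p₁, p₂, …]` in the power sum symmetric functions. The variable indexed by
`k : ℕ+` is the power sum `p_k`. -/
abbrev SymF : Type := MvPolynomial ℕ+ ℚ

/-- The power sum `p_λ` associated to a partition `P` of `n`. -/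
noncomputable def pProd {n : ℕ} (P : Nat.Partition n) : SymF :=
  (P.parts.attach.map fun i => (MvPolynomial.X ⟨i.1, P.parts_pos i.2⟩ : SymF)).prod

/-- `z_λ = ∏ i, i^{m_i(λ)} m_i(λ)!` for a partition `P` of `n`. -/
noncomputable def zOf {n : ℕ} (P : Nat.Partition n) : ℚ :=
  (P.parts.prod : ℚ) * ∏ i ∈ P.parts.toFinset, (Nat.factorial (P.parts.count i) : ℚ)

/-- The `n`-th complete homogeneous symmetric function, expressed in the power
sums via the classical formula `h_n = ∑_{λ ⊢ n} z_λ⁻¹ p_λ`. -/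
noncomputable def hSym (n : ℕ) : SymF := ∑ P : Nat.Partition n, (zOf P)⁻¹ • pProd P

/-- `h_k` for `k : ℤ`, with `h_k = 0` for negative `k`. -/
noncomputable def hZ (k : ℤ) : SymF := if 0 ≤ k then hSym k.toNat else 0

/-- The Schur function given by the Jacobi–Trudi determinant
`s_λ = det (h_{λ_i - i + j})_{1 ≤ i,j ≤ l}`. -/
noncomputable def schurSym (l : ℕ) (lam : ℕ → ℕ) : SymF :=
  Matrix.det (Matrix.of fun i j : Fin l =>
    hZ ((lam (i : ℕ) : ℤ) - ((i : ℕ) : ℤ) + ((j : ℕ) : ℤ)))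

/-- The length of a partition given as a function `ℕ → ℕ`. -/
noncomputable def plen (lam : ℕ → ℕ) : ℕ := sInf {N | ∀ i, N ≤ i → lam i = 0}

/-- The Schur function `s_λ` in the ring of symmetric functions. -/
noncomputable def schurF (lam : ℕ → ℕ) : SymF := schurSym (plen lam) lam

/-- The Littlewood–Schur function `LS_λ(X;Y) = ∑_{μ,ν} c^λ_{μν} s_μ(X) s_{ν'}(Y)`,
obtained from the Schur function `s_λ` by the specialization of the ring of
symmetric functions sending `p_k ↦ p_k(X) + (-1)^{k-1} p_k(Y)`
(i.e. `s_λ(ρ^α_X ∪ ρ^β_Y)`). -/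
noncomputable def LSC {a b : ℕ} (lam : ℕ → ℕ) (x : Fin a → ℂ) (y : Fin b → ℂ) : ℂ :=
  MvPolynomial.aeval
    (fun k : ℕ+ => (∑ i, x i ^ (k : ℕ)) + (-1 : ℂ) ^ ((k : ℕ) - 1) * ∑ j, y j ^ (k : ℕ))
    (schurF lam)

section PartA

/-- The partition-sum coefficient function. -/
noncomputable def FdC (d : ℕ → ℂ) (N : ℕ) : ℂ :=
  ∑ P : Nat.Partition N, ((zOf P : ℂ))⁻¹ * (P.parts.map d).prod

lemma zOf_ne_zero {N : ℕ} (P : Nat.Partition N) : (zOf P : ℚ) ≠ 0 := by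
  unfold zOf
  apply mul_ne_zero
  · have h0 : (0:ℕ) ∉ P.parts := fun h => lt_irrefl 0 (P.parts_pos h)
    have : P.parts.prod ≠ 0 := fun h => h0 (Multiset.prod_eq_zero_iff.mp h)
    exact_mod_cast this
  · exact Finset.prod_ne_zero_iff.mpr fun i _ => by
      exact_mod_cast Nat.factorial_ne_zero _

lemma FdC_zero (d : ℕ → ℂ) : FdC d 0 = 1 := by
  rw [FdC, Finset.univ_unique, Finset.sum_singleton]
  have h : (default : Nat.Partition 0).parts = 0 := Nat.Partition.partition_zero_parts _
  simp [zOf, h]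

lemma prodFact_cons (k : ℕ) (s : Multiset ℕ) :
    ∏ i ∈ (k ::ₘ s).toFinset, ((k ::ₘ s).count i).factorial
      = (s.count k + 1) * ∏ i ∈ s.toFinset, (s.count i).factorial := by
  rw [Multiset.toFinset_cons]
  by_cases hk : k ∈ s.toFinset
  · rw [Finset.insert_eq_self.mpr hk]
    rw [← Finset.mul_prod_erase _ _ hk, ← Finset.mul_prod_erase _ _ hk]
    rw [Multiset.count_cons_self, Nat.factorial_succ, mul_assoc]
    congr 1
    congr 1
    exact Finset.prod_congr rfl fun i hi => by
      rw [Multiset.count_cons_of_ne (Finset.ne_of_mem_erase hi)]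
  · rw [Finset.prod_insert hk]
    have hc : s.count k = 0 :=
      Multiset.count_eq_zero.mpr fun h => hk (Multiset.mem_toFinset.mpr h)
    rw [Multiset.count_cons_self, hc]
    simp only [Nat.factorial_one, zero_add, one_mul]
    exact Finset.prod_congr rfl fun i hi => by
      rw [Multiset.count_cons_of_ne]
      exact fun h => hk (h ▸ hi)

lemma zOf_cons {M M' : ℕ} {k : ℕ} (μ : Nat.Partition M) (P : Nat.Partition M')
    (hP : P.parts = k ::ₘ μ.parts) :
    (zOf P : ℚ) = zOf μ * k * (μ.parts.count k + 1) := by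
  unfold zOf
  rw [hP, Multiset.prod_cons]
  rw [← Nat.cast_prod, ← Nat.cast_prod, prodFact_cons]
  push_cast
  ring

lemma term_eq {M M' : ℕ} (P : Nat.Partition M') (μ : Nat.Partition M) {k : ℕ} (hk : 0 < k)
    (hc : P.parts = k ::ₘ μ.parts) (d : ℕ → ℂ) :
    ((k:ℂ) * (P.parts.count k : ℂ)) * (((zOf P : ℂ))⁻¹ * (P.parts.map d).prod)
      = d k * (((zOf μ : ℂ))⁻¹ * (μ.parts.map d).prod) := by
  have hz : ((zOf P : ℚ) : ℂ) = (zOf μ : ℂ) * (k : ℂ) * ((μ.parts.count k : ℂ) + 1) := by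
    rw [zOf_cons μ P hc]; push_cast; ring
  rw [hz, hc, Multiset.map_cons, Multiset.prod_cons, Multiset.count_cons_self]
  have hz2 : ((zOf μ : ℚ) : ℂ) ≠ 0 := by exact_mod_cast zOf_ne_zero μ
  have hk' : (k : ℂ) ≠ 0 := Nat.cast_ne_zero.mpr (by omega)
  have hc1 : ((μ.parts.count k : ℂ) + 1) ≠ 0 := by
    have : ((μ.parts.count k : ℂ) + 1) = ((μ.parts.count k + 1 : ℕ) : ℂ) := by push_cast; ring
    rw [this]
    exact Nat.cast_ne_zero.mpr (by omega)
  push_cast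
  field_simp

lemma sigma_part_ext {N : ℕ} {k k' : ℕ} (h : k = k') (μ : Nat.Partition (N - k))
    (μ' : Nat.Partition (N - k')) (hparts : μ.parts = μ'.parts) :
    (⟨k, μ⟩ : Σ k, Nat.Partition (N - k)) = ⟨k', μ'⟩ := by
  subst h
  exact congrArg _ (Nat.Partition.ext hparts)

set_option maxHeartbeats 1000000 in
lemma FdC_rec (d : ℕ → ℂ) (N : ℕ) :
    (N + 1 : ℂ) * FdC d (N + 1) = ∑ k ∈ Finset.range (N + 1), d (k + 1) * FdC d (N - k) := by
  have hL : ∀ P : Nat.Partition (N+1),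
      (N + 1 : ℂ) * (((zOf P : ℂ))⁻¹ * (P.parts.map d).prod)
      = ∑ i ∈ P.parts.toFinset,
          ((i : ℂ) * (P.parts.count i : ℂ)) * (((zOf P : ℂ))⁻¹ * (P.parts.map d).prod) := by
    intro P
    rw [← Finset.sum_mul]
    congr 1
    have h1 : ((N:ℂ) + 1) = ((P.parts.sum : ℕ) : ℂ) := by rw [P.parts_sum]; push_cast; ring
    rw [h1]
    have h2 := Finset.sum_multiset_map_count P.parts (id : ℕ → ℕ)
    simp only [Multiset.map_id, Multiset.map_id', id_eq, smul_eq_mul] at h2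
    rw [h2]
    push_cast
    exact Finset.sum_congr rfl fun i _ => by ring
  simp only [FdC, Finset.mul_sum]
  simp_rw [hL]
  rw [Finset.sum_sigma', Finset.sum_sigma']
  refine Finset.sum_bij'
    (i := fun a ha => ⟨a.2 - 1,
      ⟨a.1.parts.erase a.2,
       fun {x} hx => a.1.parts_pos (Multiset.mem_of_mem_erase hx),
       by
        have hm : a.2 ∈ a.1.parts :=
          Multiset.mem_toFinset.mp (Finset.mem_sigma.mp ha).2
        have hsum := Multiset.sum_erase hm
        rw [a.1.parts_sum] at hsum
        have hp : 0 < a.2 := a.1.parts_pos hm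
        omega⟩⟩)
    (j := fun b hb => ⟨⟨(b.1 + 1) ::ₘ b.2.parts,
       fun {x} hx => by
        rcases Multiset.mem_cons.mp hx with h | h
        · omega
        · exact b.2.parts_pos h,
       by
        have hb1 : b.1 < N + 1 := Finset.mem_range.mp (Finset.mem_sigma.mp hb).1
        rw [Multiset.sum_cons, b.2.parts_sum]
        omega⟩, b.1 + 1⟩)
    ?_ ?_ ?_ ?_ ?_
  · intro a ha
    rw [Finset.mem_sigma]
    constructor
    · have hm : a.2 ∈ a.1.parts :=
        Multiset.mem_toFinset.mp (Finset.mem_sigma.mp ha).2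
      have hle := Multiset.le_sum_of_mem hm
      rw [a.1.parts_sum] at hle
      have hp : 0 < a.2 := a.1.parts_pos hm
      rw [Finset.mem_range]
      show a.2 - 1 < N + 1
      omega
    · exact Finset.mem_univ _
  · intro b hb
    rw [Finset.mem_sigma]
    refine ⟨Finset.mem_univ _, ?_⟩
    rw [Multiset.mem_toFinset]
    exact Multiset.mem_cons_self _ _
  · intro a ha
    dsimp only
    have hm : a.2 ∈ a.1.parts :=
      Multiset.mem_toFinset.mp (Finset.mem_sigma.mp ha).2
    have hp : 0 < a.2 := a.1.parts_pos hm
    have h2 : a.2 - 1 + 1 = a.2 := by omega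
    refine Sigma.ext ?_ (heq_of_eq h2)
    refine Nat.Partition.ext ?_
    show (a.2 - 1 + 1) ::ₘ a.1.parts.erase a.2 = a.1.parts
    rw [h2]
    exact Multiset.cons_erase hm
  · intro b hb
    dsimp only
    exact sigma_part_ext (Nat.succ_sub_one _)
      _ _ (Multiset.erase_cons_head _ _)
  · intro a ha
    dsimp only
    have hm : a.2 ∈ a.1.parts :=
      Multiset.mem_toFinset.mp (Finset.mem_sigma.mp ha).2
    have hp : 0 < a.2 := a.1.parts_pos hm
    have h2 : a.2 - 1 + 1 = a.2 := by omega
    have h3 : d (a.2 - 1 + 1) = d a.2 := by rw [h2]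
    rw [h3]
    exact term_eq a.1 _ hp (Multiset.cons_erase hm).symm d

end PartA
section PartA2

lemma coeff_derivativeFun_old (f : PowerSeries ℂ) (n : ℕ) :
    PowerSeries.coeff n f.derivativeFun = PowerSeries.coeff (n + 1) f * (n + 1) :=
  PowerSeries.coeff_derivative f n

noncomputable def Fps (d : ℕ → ℂ) : PowerSeries ℂ := PowerSeries.mk (FdC d)
noncomputable def Dd (d : ℕ → ℂ) : PowerSeries ℂ := PowerSeries.mk fun r => d (r + 1)

lemma constantCoeff_Fps (d : ℕ → ℂ) : PowerSeries.constantCoeff (Fps d) = 1 := by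
  rw [← PowerSeries.coeff_zero_eq_constantCoeff]
  simp [Fps, FdC_zero]

lemma Fps_deriv (d : ℕ → ℂ) : (Fps d).derivativeFun = Dd d * Fps d := by
  apply PowerSeries.ext; intro N
  rw [coeff_derivativeFun_old, PowerSeries.coeff_mul,
    Finset.Nat.sum_antidiagonal_eq_sum_range_succ_mk]
  simp only [Fps, Dd, PowerSeries.coeff_mk]
  rw [mul_comm]
  exact_mod_cast FdC_rec d N

lemma deriv_determined {D F G : PowerSeries ℂ} (hF : F.derivativeFun = D * F)
    (hG : G.derivativeFun = D * G)
    (h0 : PowerSeries.constantCoeff F = PowerSeries.constantCoeff G) : F = G := by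
  apply PowerSeries.ext
  intro N
  induction N using Nat.strong_induction_on with
  | _ N ih =>
    match N with
    | 0 => simpa [PowerSeries.coeff_zero_eq_constantCoeff] using h0
    | Nat.succ N =>
      have e1 := congrArg (PowerSeries.coeff N) hF
      have e2 := congrArg (PowerSeries.coeff N) hG
      rw [coeff_derivativeFun_old, PowerSeries.coeff_mul] at e1 e2
      have hsum : ∑ p ∈ Finset.HasAntidiagonal.antidiagonal N, PowerSeries.coeff p.1 D * PowerSeries.coeff p.2 F
          = ∑ p ∈ Finset.HasAntidiagonal.antidiagonal N, PowerSeries.coeff p.1 D * PowerSeries.coeff p.2 G := by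
        apply Finset.sum_congr rfl
        intro p hp
        have hmem := Finset.HasAntidiagonal.mem_antidiagonal.mp hp
        rw [ih p.2 (by omega)]
      have hne : ((N:ℂ)+1) ≠ 0 := Nat.cast_add_one_ne_zero N
      exact mul_right_cancel₀ hne (e1.trans (hsum.trans e2.symm))

lemma Fps_add (d1 d2 : ℕ → ℂ) : Fps (fun k => d1 k + d2 k) = Fps d1 * Fps d2 := by
  apply deriv_determined (D := Dd d1 + Dd d2)
  · have hD : Dd (fun k => d1 k + d2 k) = Dd d1 + Dd d2 := by
      apply PowerSeries.ext; intro N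
      simp [Dd]
    rw [Fps_deriv, hD]
  · rw [PowerSeries.derivativeFun_mul, Fps_deriv, Fps_deriv]
    simp only [smul_eq_mul]
    ring
  · rw [map_mul, constantCoeff_Fps, constantCoeff_Fps, constantCoeff_Fps, one_mul]

lemma Fps_geom (u : ℂ) : Fps (fun k => u ^ k) = PowerSeries.mk fun N => u ^ N := by
  apply deriv_determined (D := Dd fun k => u ^ k) (Fps_deriv _)
  · apply PowerSeries.ext; intro N
    rw [coeff_derivativeFun_old, PowerSeries.coeff_mul,
      Finset.Nat.sum_antidiagonal_eq_sum_range_succ_mk]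
    simp only [Dd, PowerSeries.coeff_mk]
    have h : ∀ k ∈ Finset.range (N+1), u ^ (k+1) * u ^ (N-k) = u ^ (N+1) := by
      intro k hk
      rw [← pow_add]
      congr 1
      have := Finset.mem_range.mp hk
      omega
    rw [Finset.sum_congr rfl h, Finset.sum_const, Finset.card_range]
    simp only [nsmul_eq_mul]
    push_cast
    ring
  · simp [constantCoeff_Fps, ← PowerSeries.coeff_zero_eq_constantCoeff]

lemma Fps_lin (u : ℂ) :
    Fps (fun k => -(-u) ^ k)
      = PowerSeries.mk fun N => if N = 0 then (1:ℂ) else if N = 1 then u else 0 := by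
  apply deriv_determined (D := Dd fun k => -(-u) ^ k) (Fps_deriv _)
  · apply PowerSeries.ext; intro N
    rw [coeff_derivativeFun_old, PowerSeries.coeff_mul,
      Finset.Nat.sum_antidiagonal_eq_sum_range_succ_mk]
    simp only [Dd, PowerSeries.coeff_mk]
    match N with
    | 0 => norm_num
    | Nat.succ M =>
      rw [Finset.sum_range_succ, Finset.sum_range_succ]
      have hz : ∀ k ∈ Finset.range M,
          -(-u)^(k+1) * (if M+1-k = 0 then (1:ℂ) else if M+1-k = 1 then u else 0) = 0 := by
        intro k hk
        have := Finset.mem_range.mp hk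
        rw [if_neg (by omega), if_neg (by omega), mul_zero]
      rw [Finset.sum_congr rfl hz, Finset.sum_const_zero, zero_add]
      have h1 : M + 1 - M = 1 := by omega
      have h2 : M + 1 - (M+1) = 0 := by omega
      rw [h1, h2]
      norm_num
      rw [pow_succ]
      ring
  · simp [constantCoeff_Fps, ← PowerSeries.coeff_zero_eq_constantCoeff]

lemma Fps_zero : Fps (fun _ => (0:ℂ)) = 1 := by
  apply deriv_determined (D := Dd fun _ => (0:ℂ)) (Fps_deriv _)
  · have hD : Dd (fun _ => (0:ℂ)) = 0 := by
      apply PowerSeries.ext; intro N; simp [Dd]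
    rw [hD, zero_mul]
    apply PowerSeries.ext; intro N
    rw [coeff_derivativeFun_old]
    simp [PowerSeries.coeff_one]
  · simp [constantCoeff_Fps]

lemma Fps_sum {ι : Type} (s : Finset ι) (d : ι → ℕ → ℂ) :
    Fps (fun k => ∑ i ∈ s, d i k) = ∏ i ∈ s, Fps (d i) := by
  induction s using Finset.cons_induction with
  | empty => simpa using Fps_zero
  | cons a s ha ih =>
    simp only [Finset.sum_cons, Finset.prod_cons, ← ih]
    exact Fps_add _ _

lemma mk_lin (u : ℂ) :
    (PowerSeries.mk fun N => if N = 0 then (1:ℂ) else if N = 1 then u else 0)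
      = 1 + PowerSeries.C u * PowerSeries.X := by
  apply PowerSeries.ext; intro N
  match N with
  | 0 => simp
  | 1 => simp
  | Nat.succ (Nat.succ M) => simp [PowerSeries.coeff_one, PowerSeries.coeff_C_mul, PowerSeries.coeff_X]

lemma aeval_pProd (c : ℕ+ → ℂ) {N : ℕ} (P : Nat.Partition N) (d : ℕ → ℂ)
    (h : ∀ (k : ℕ) (hk : 0 < k), d k = c ⟨k, hk⟩) :
    MvPolynomial.aeval c (pProd P) = (P.parts.map d).prod := by
  rw [pProd, map_multiset_prod, Multiset.map_map]
  have hm : P.parts.map d = P.parts.attach.map (fun i => d i.1) := by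
    conv_lhs => rw [← Multiset.attach_map_val P.parts]
    rw [Multiset.map_map]
    rfl
  rw [hm]
  refine congrArg Multiset.prod ?_
  apply Multiset.map_congr rfl
  intro i hi
  simp only [Function.comp_apply, MvPolynomial.aeval_X]
  exact (MvPolynomial.aeval_X c _).trans (h i.1 (P.parts_pos i.2)).symm

lemma aeval_hSym (c : ℕ+ → ℂ) (d : ℕ → ℂ) (h : ∀ (k : ℕ) (hk : 0 < k), d k = c ⟨k, hk⟩)
    (N : ℕ) : MvPolynomial.aeval c (hSym N) = FdC d N := by
  rw [hSym, map_sum, FdC]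
  apply Finset.sum_congr rfl
  intro P _
  rw [MvPolynomial.smul_eq_C_mul, map_mul, MvPolynomial.aeval_C, map_inv₀, eq_ratCast,
    aeval_pProd c P d h]

lemma aeval_c_hSym {n m : ℕ} (u : Fin n → ℂ) (y : Fin m → ℂ) (N : ℕ) :
    MvPolynomial.aeval
      (fun k : ℕ+ => (∑ i, u i ^ (k:ℕ)) + (-1:ℂ) ^ ((k:ℕ) - 1) * ∑ j, y j ^ (k:ℕ))
      (hSym N)
    = PowerSeries.coeff N ((∏ j, (1 + PowerSeries.C (y j) * PowerSeries.X))
        * ∏ i, PowerSeries.mk fun r => u i ^ r) := by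
  have h : ∀ (k : ℕ) (hk : 0 < k),
      ((fun k => (fun k => ∑ j, -(-(y j)) ^ k) k + (fun k => ∑ i, u i ^ k) k) k)
        = (∑ i, u i ^ ((⟨k, hk⟩ : ℕ+) :ℕ)) + (-1:ℂ) ^ (((⟨k, hk⟩ : ℕ+):ℕ) - 1) * ∑ j, y j ^ ((⟨k, hk⟩ : ℕ+):ℕ) := by
    intro k hk
    simp only [PNat.mk_coe]
    rw [add_comm]
    congr 1
    rw [Finset.mul_sum]
    apply Finset.sum_congr rfl
    intro j _
    obtain ⟨k', rfl⟩ : ∃ k', k = k' + 1 := ⟨k - 1, by omega⟩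
    rw [neg_pow (y j)]
    simp only [Nat.add_sub_cancel]
    rw [pow_succ]
    ring
  rw [aeval_hSym _ _ h N]
  have hF : FdC (fun k => (fun k => ∑ j, -(-(y j)) ^ k) k + (fun k => ∑ i, u i ^ k) k) N
      = PowerSeries.coeff N (Fps (fun k => (fun k => ∑ j, -(-(y j)) ^ k) k + (fun k => ∑ i, u i ^ k) k)) := by
    simp [Fps]
  rw [hF, Fps_add]
  have h1 : (Fps fun k => ∑ j, -(-(y j)) ^ k) = ∏ j, (1 + PowerSeries.C (y j) * PowerSeries.X) := by
    rw [Fps_sum Finset.univ (fun j => fun k => -(-(y j)) ^ k)]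
    apply Finset.prod_congr rfl
    intro j _
    rw [Fps_lin, mk_lin]
  have h2 : (Fps fun k => ∑ i, u i ^ k) = ∏ i, PowerSeries.mk fun r => u i ^ r := by
    rw [Fps_sum Finset.univ (fun i => fun k => u i ^ k)]
    apply Finset.prod_congr rfl
    intro i _
    exact Fps_geom (u i)
  rw [h1, h2]

end PartA2
section PartB

open Polynomial

noncomputable def zpt {n : ℕ} (x : Fin n → ℂ) (p : Fin n) : ℂ := -(x p)⁻¹

noncomputable def Mpol {n : ℕ} (x : Fin n → ℂ) : Polynomial ℂ :=
  ∏ p, (Polynomial.X + Polynomial.C ((x p)⁻¹))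

noncomputable def Bpol {m : ℕ} (y : Fin m → ℂ) : Polynomial ℂ :=
  ∏ j, (1 + Polynomial.C (y j) * Polynomial.X)

noncomputable def Rpol {n m : ℕ} (x : Fin n → ℂ) (y : Fin m → ℂ) : Polynomial ℂ :=
  Bpol y %ₘ Mpol x

noncomputable def rres {n m : ℕ} (x : Fin n → ℂ) (y : Fin m → ℂ) (p : Fin n) : ℂ :=
  (Rpol x y).eval (zpt x p) * ∏ q ∈ Finset.univ.erase p, (zpt x p - zpt x q)⁻¹

noncomputable def rho {n m : ℕ} (x : Fin n → ℂ) (y : Fin m → ℂ) (p : Fin n) : ℂ :=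
  rres x y p * ∏ q ∈ Finset.univ.erase p, (x q)⁻¹

noncomputable def Gser {n : ℕ} (x : Fin n → ℂ) : PowerSeries ℂ :=
  ∏ p, PowerSeries.mk fun N => (-(x p)) ^ N

noncomputable def Fser {n m : ℕ} (x : Fin n → ℂ) (y : Fin m → ℂ) : PowerSeries ℂ :=
  ((Bpol y : Polynomial ℂ) : PowerSeries ℂ) * Gser x

lemma monic_Mpol {n : ℕ} (x : Fin n → ℂ) : (Mpol x).Monic :=
  monic_prod_of_monic _ _ fun p _ => monic_X_add_C _

lemma natDegree_Mpol {n : ℕ} (x : Fin n → ℂ) : (Mpol x).natDegree = n := by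
  rw [Mpol, natDegree_prod_of_monic _ _ fun p _ => monic_X_add_C _]
  simp [natDegree_X_add_C]

lemma natDegree_Bpol {m : ℕ} (y : Fin m → ℂ) : (Bpol y).natDegree ≤ m := by
  refine le_trans (natDegree_prod_le _ _) ?_
  have h : ∀ j : Fin m, (1 + Polynomial.C (y j) * Polynomial.X).natDegree ≤ 1 := by
    intro j
    refine le_trans (natDegree_add_le _ _) ?_
    simp only [natDegree_one]
    refine max_le (by omega) ?_
    refine le_trans natDegree_mul_le ?_
    simp
  refine le_trans (Finset.sum_le_sum fun j _ => h j) ?_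
  simp

lemma natDegree_Rpol_lt {n m : ℕ} (x : Fin n → ℂ) (y : Fin m → ℂ) (hn : 0 < n) :
    (Rpol x y).natDegree < n := by
  by_cases hR0 : Rpol x y = 0
  · simpa [hR0]
  · have h := degree_modByMonic_lt (Bpol y) (monic_Mpol x)
    rw [degree_eq_natDegree (monic_Mpol x).ne_zero, natDegree_Mpol] at h
    exact (natDegree_lt_iff_degree_lt hR0).mpr h

lemma eval_Mpol_z {n : ℕ} (x : Fin n → ℂ) (p : Fin n) : (Mpol x).eval (zpt x p) = 0 := by
  rw [Mpol, Polynomial.eval_prod]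
  apply Finset.prod_eq_zero (Finset.mem_univ p)
  simp [zpt]

lemma eval_Rpol_z {n m : ℕ} (x : Fin n → ℂ) (y : Fin m → ℂ) (p : Fin n) :
    (Rpol x y).eval (zpt x p) = (Bpol y).eval (zpt x p) := by
  conv_rhs => rw [← modByMonic_add_div (Bpol y) (Mpol x)]
  rw [Polynomial.eval_add, Polynomial.eval_mul, eval_Mpol_z, zero_mul, add_zero, Rpol]

lemma zpt_inj {n : ℕ} {x : Fin n → ℂ} (hx0 : ∀ p, x p ≠ 0) (hinj : Function.Injective x) :
    Function.Injective (zpt x) := by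
  intro p q h
  apply hinj
  have h2 := congrArg (fun t : ℂ => (-t)⁻¹) h
  simpa [zpt, hx0 p, hx0 q] using h2

lemma one_sub_geom (u : ℂ) :
    (1 + PowerSeries.C u * PowerSeries.X) * (PowerSeries.mk fun N => (-u) ^ N) = 1 := by
  apply PowerSeries.ext
  intro N
  rw [add_mul, one_mul, map_add, mul_assoc]
  match N with
  | 0 => simp
  | Nat.succ M =>
    rw [PowerSeries.coeff_C_mul, PowerSeries.coeff_succ_X_mul]
    simp only [PowerSeries.coeff_mk, PowerSeries.coeff_one]
    rw [if_neg (Nat.succ_ne_zero M), pow_succ]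
    ring

lemma coe_factor_mul_geom {a : ℂ} (ha : a ≠ 0) :
    ((Polynomial.X + Polynomial.C a⁻¹ : Polynomial ℂ) : PowerSeries ℂ)
      * (PowerSeries.mk fun N => (-a) ^ N) = PowerSeries.C a⁻¹ := by
  have hp : (Polynomial.X + Polynomial.C a⁻¹ : Polynomial ℂ)
      = Polynomial.C a⁻¹ * (1 + Polynomial.C a * Polynomial.X) := by
    rw [mul_add, mul_one, ← mul_assoc, ← Polynomial.C_mul, inv_mul_cancel₀ ha, Polynomial.C_1,
      one_mul, add_comm]
  rw [hp]
  simp only [Polynomial.coe_mul, Polynomial.coe_add, Polynomial.coe_one, Polynomial.coe_C,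
    Polynomial.coe_X]
  rw [mul_assoc, one_sub_geom, mul_one]

lemma coe_X_sub_z_mul_geom {n : ℕ} (x : Fin n → ℂ) (hx0 : ∀ p, x p ≠ 0) (q : Fin n) :
    ((Polynomial.X - Polynomial.C (zpt x q) : Polynomial ℂ) : PowerSeries ℂ)
      * (PowerSeries.mk fun N => (-(x q)) ^ N) = PowerSeries.C (x q)⁻¹ := by
  have h : (Polynomial.X - Polynomial.C (zpt x q) : Polynomial ℂ)
      = Polynomial.X + Polynomial.C ((x q)⁻¹) := by
    rw [zpt, map_neg, sub_neg_eq_add]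
  rw [h]
  exact coe_factor_mul_geom (hx0 q)

lemma Mpol_mul_Gser {n : ℕ} (x : Fin n → ℂ) (hx0 : ∀ p, x p ≠ 0) :
    ((Mpol x : Polynomial ℂ) : PowerSeries ℂ) * Gser x = PowerSeries.C (∏ p, (x p)⁻¹) := by
  rw [Mpol, Gser, ← Polynomial.coeToPowerSeries.ringHom_apply,
    map_prod (Polynomial.coeToPowerSeries.ringHom : Polynomial ℂ →+* PowerSeries ℂ),
    ← Finset.prod_mul_distrib, map_prod (PowerSeries.C)]
  apply Finset.prod_congr rfl
  intro p _
  rw [Polynomial.coeToPowerSeries.ringHom_apply]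
  exact coe_factor_mul_geom (hx0 p)

lemma Lp_mul_Gser {n : ℕ} (x : Fin n → ℂ) (hx0 : ∀ p, x p ≠ 0) (p : Fin n) :
    ((∏ q ∈ Finset.univ.erase p, (Polynomial.X - Polynomial.C (zpt x q)) : Polynomial ℂ) : PowerSeries ℂ)
      * Gser x
    = PowerSeries.C (∏ q ∈ Finset.univ.erase p, (x q)⁻¹)
        * PowerSeries.mk (fun N => (-(x p)) ^ N) := by
  rw [Gser, ← Finset.mul_prod_erase _ _ (Finset.mem_univ p),
    ← Polynomial.coeToPowerSeries.ringHom_apply,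
    map_prod (Polynomial.coeToPowerSeries.ringHom : Polynomial ℂ →+* PowerSeries ℂ)]
  rw [mul_left_comm, ← Finset.prod_mul_distrib]
  have h : ∀ q ∈ Finset.univ.erase p,
      (Polynomial.coeToPowerSeries.ringHom : Polynomial ℂ →+* PowerSeries ℂ)
          (Polynomial.X - Polynomial.C (zpt x q)) * PowerSeries.mk (fun N => (-(x q)) ^ N)
        = PowerSeries.C ((x q)⁻¹) := by
    intro q _
    rw [Polynomial.coeToPowerSeries.ringHom_apply]
    exact coe_X_sub_z_mul_geom x hx0 q
  rw [Finset.prod_congr rfl h, map_prod (PowerSeries.C), mul_comm]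

lemma Rpol_interp {n m : ℕ} (x : Fin n → ℂ) (y : Fin m → ℂ)
    (hx0 : ∀ p, x p ≠ 0) (hinj : Function.Injective x) :
    Rpol x y = ∑ p, Polynomial.C (rres x y p)
      * ∏ q ∈ Finset.univ.erase p, (Polynomial.X - Polynomial.C (zpt x q)) := by
  have hdeg : (Rpol x y).degree < (Finset.univ : Finset (Fin n)).card := by
    rw [Finset.card_univ, Fintype.card_fin]
    calc (Rpol x y).degree < (Mpol x).degree := degree_modByMonic_lt (Bpol y) (monic_Mpol x)
      _ ≤ (n : ℕ) := by
          rw [degree_eq_natDegree (monic_Mpol x).ne_zero, natDegree_Mpol]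
  have hzinj : Set.InjOn (zpt x) ((Finset.univ : Finset (Fin n)) : Set (Fin n)) :=
    fun a _ b _ h => zpt_inj hx0 hinj h
  have h := Lagrange.eq_interpolate hzinj hdeg
  rw [Lagrange.interpolate_apply] at h
  conv_lhs => rw [h]
  apply Finset.sum_congr rfl
  intro p _
  rw [Lagrange.basis]
  have hb : ∀ q ∈ Finset.univ.erase p,
      Lagrange.basisDivisor (zpt x p) (zpt x q)
        = Polynomial.C ((zpt x p - zpt x q)⁻¹) * (Polynomial.X - Polynomial.C (zpt x q)) := by
    intro q _
    rfl
  rw [Finset.prod_congr rfl hb, Finset.prod_mul_distrib,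
    ← map_prod (Polynomial.C : ℂ →+* Polynomial ℂ)]
  rw [rres, map_mul, mul_assoc]

lemma Fser_eq {n m : ℕ} (x : Fin n → ℂ) (y : Fin m → ℂ)
    (hx0 : ∀ p, x p ≠ 0) (hinj : Function.Injective x) :
    Fser x y = ((Bpol y /ₘ Mpol x : Polynomial ℂ) : PowerSeries ℂ)
        * PowerSeries.C (∏ p, (x p)⁻¹)
      + ∑ p, PowerSeries.C (rho x y p) * PowerSeries.mk (fun N => (-(x p)) ^ N) := by
  have hB : (Bpol y : Polynomial ℂ) = Rpol x y + Mpol x * (Bpol y /ₘ Mpol x) :=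
    (modByMonic_add_div (Bpol y) (Mpol x)).symm
  rw [Fser]
  conv_lhs => rw [hB]
  rw [Polynomial.coe_add, Polynomial.coe_mul, add_mul, add_comm]
  congr 1
  · rw [mul_right_comm, Mpol_mul_Gser x hx0, mul_comm]
  · rw [Rpol_interp x y hx0 hinj, ← Polynomial.coeToPowerSeries.ringHom_apply, map_sum,
      Finset.sum_mul]
    apply Finset.sum_congr rfl
    intro p _
    rw [map_mul, Polynomial.coeToPowerSeries.ringHom_apply,
      Polynomial.coeToPowerSeries.ringHom_apply, Polynomial.coe_C, mul_assoc,
      Lp_mul_Gser x hx0 p, rho, map_mul, mul_assoc]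

lemma coeffF_big {n m : ℕ} (x : Fin n → ℂ) (y : Fin m → ℂ)
    (hx0 : ∀ p, x p ≠ 0) (hinj : Function.Injective x) (hn : 0 < n) (N : ℕ) (hN : m < N + n) :
    PowerSeries.coeff N (Fser x y) = ∑ p, rho x y p * (-(x p)) ^ N := by
  rw [Fser_eq x y hx0 hinj, map_add]
  have hQ : (Bpol y /ₘ Mpol x).coeff N = 0 := by
    by_cases hQ0 : Bpol y /ₘ Mpol x = 0
    · simp [hQ0]
    · apply Polynomial.coeff_eq_zero_of_natDegree_lt
      by_contra hcon
      push_neg at hcon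
      have hMQ : (Mpol x * (Bpol y /ₘ Mpol x)).natDegree
          = n + (Bpol y /ₘ Mpol x).natDegree := by
        rw [natDegree_mul (monic_Mpol x).ne_zero hQ0, natDegree_Mpol]
      have hsub : Mpol x * (Bpol y /ₘ Mpol x) = Bpol y - Rpol x y := by
        conv_rhs => rw [← modByMonic_add_div (Bpol y) (Mpol x)]
        rw [Rpol]
        ring
      have key : n + (Bpol y /ₘ Mpol x).natDegree
          ≤ max (Bpol y).natDegree (Rpol x y).natDegree := by
        rw [← hMQ, hsub]
        exact natDegree_sub_le _ _
      have hB := natDegree_Bpol y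
      have hR := natDegree_Rpol_lt x y hn
      rcases max_cases (Bpol y).natDegree (Rpol x y).natDegree with ⟨he, _⟩ | ⟨he, _⟩ <;>
        rw [he] at key <;> omega
  rw [PowerSeries.coeff_mul_C, Polynomial.coeff_coe, hQ, zero_mul, zero_add, map_sum]
  apply Finset.sum_congr rfl
  intro p _
  rw [PowerSeries.coeff_C_mul, PowerSeries.coeff_mk]

lemma degree_Bpol {m : ℕ} (y : Fin m → ℂ) : (Bpol y).degree ≤ (m : ℕ) :=
  le_trans degree_le_natDegree (by exact_mod_cast Nat.cast_le.mpr (natDegree_Bpol y))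

lemma lagrange_sum_zero {n : ℕ} (z : Fin n → ℂ) (hz : Function.Injective z) (hn : 0 < n)
    (G : Polynomial ℂ) (hd : G.degree < ((n - 1 : ℕ) : WithBot ℕ)) :
    ∑ p, G.eval (z p) * ∏ q ∈ Finset.univ.erase p, (z p - z q)⁻¹ = 0 := by
  have hdeg : G.degree < (Finset.univ : Finset (Fin n)).card := by
    rw [Finset.card_univ, Fintype.card_fin]
    calc G.degree < ((n - 1 : ℕ) : WithBot ℕ) := hd
      _ ≤ (n : ℕ) := by exact_mod_cast (show n - 1 ≤ n by omega)
  have hzinj : Set.InjOn z ((Finset.univ : Finset (Fin n)) : Set (Fin n)) :=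
    fun a _ b _ h => hz h
  have h := Lagrange.eq_interpolate hzinj hdeg
  rw [Lagrange.interpolate_apply] at h
  have hco := congrArg (fun P : Polynomial ℂ => P.coeff (n - 1)) h
  rw [Polynomial.coeff_eq_zero_of_degree_lt (by exact_mod_cast hd), Polynomial.finset_sum_coeff] at hco
  have hterm : ∀ p : Fin n,
      (Polynomial.C (G.eval (z p)) * Lagrange.basis Finset.univ z p).coeff (n-1)
        = G.eval (z p) * ∏ q ∈ Finset.univ.erase p, (z p - z q)⁻¹ := by
    intro p
    rw [Polynomial.coeff_C_mul]
    congr 1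
    rw [Lagrange.basis]
    have hb : ∀ q ∈ Finset.univ.erase p,
        Lagrange.basisDivisor (z p) (z q)
          = Polynomial.C ((z p - z q)⁻¹) * (Polynomial.X - Polynomial.C (z q)) :=
      fun q _ => rfl
    rw [Finset.prod_congr rfl hb, Finset.prod_mul_distrib,
      ← map_prod (Polynomial.C : ℂ →+* Polynomial ℂ), Polynomial.coeff_C_mul]
    have hmonic : (∏ q ∈ Finset.univ.erase p, (Polynomial.X - Polynomial.C (z q))).Monic :=
      monic_prod_of_monic _ _ fun q _ => monic_X_sub_C _
    have hdeg2 : (∏ q ∈ Finset.univ.erase p, (Polynomial.X - Polynomial.C (z q))).natDegree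
        = n - 1 := by
      rw [natDegree_prod_of_monic _ _ fun q _ => monic_X_sub_C _]
      simp [Finset.card_erase_of_mem]
    rw [← hdeg2, hmonic.coeff_natDegree, mul_one]
  exact (Finset.sum_congr rfl (fun p _ => (hterm p).symm)).trans hco.symm

lemma sum_rho_neg {n m : ℕ} (x : Fin n → ℂ) (y : Fin m → ℂ) (hx0 : ∀ p, x p ≠ 0)
    (hinj : Function.Injective x) (s : ℕ) (hs : 1 ≤ s) (hsm : s + m + 1 ≤ n) :
    ∑ p, rho x y p * ((-(x p))⁻¹) ^ s = 0 := by
  have hn : 0 < n := by omega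
  have hR_eq_B : Rpol x y = Bpol y := by
    rw [Rpol]
    apply (modByMonic_eq_self_iff (monic_Mpol x)).mpr
    rw [degree_eq_natDegree (monic_Mpol x).ne_zero, natDegree_Mpol]
    calc (Bpol y).degree ≤ (m:ℕ) := degree_Bpol y
      _ < (n:ℕ) := by exact_mod_cast (show m < n by omega)
  have hdG : (Rpol x y * Polynomial.X ^ (s-1)).degree < ((n - 1 : ℕ) : WithBot ℕ) := by
    apply lt_of_le_of_lt (degree_mul_le _ _)
    have h1 : (Rpol x y).degree ≤ ((m:ℕ) : WithBot ℕ) := hR_eq_B ▸ degree_Bpol y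
    have h2 : (Polynomial.X ^ (s-1) : Polynomial ℂ).degree = ((s-1 : ℕ) : WithBot ℕ) :=
      degree_X_pow _
    calc (Rpol x y).degree + (Polynomial.X ^ (s-1) : Polynomial ℂ).degree
        ≤ ((m:ℕ) : WithBot ℕ) + ((s-1:ℕ) : WithBot ℕ) := add_le_add h1 h2.le
      _ = ((m + (s-1) : ℕ) : WithBot ℕ) := by push_cast; rfl
      _ < ((n-1 : ℕ) : WithBot ℕ) := by exact_mod_cast (show m + (s-1) < n - 1 by omega)
  have hterm : ∀ p, rho x y p * ((-(x p))⁻¹)^s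
      = (-(∏ q, (x q)⁻¹)) * ((Rpol x y * Polynomial.X ^ (s-1)).eval (zpt x p)
          * ∏ q ∈ Finset.univ.erase p, (zpt x p - zpt x q)⁻¹) := by
    intro p
    have hz : (-(x p))⁻¹ = zpt x p := by rw [zpt, inv_neg]
    have herase : ∏ q ∈ Finset.univ.erase p, (x q)⁻¹ = x p * ∏ q, (x q)⁻¹ := by
      rw [← Finset.mul_prod_erase _ (fun q => (x q)⁻¹) (Finset.mem_univ p), ← mul_assoc,
        mul_inv_cancel₀ (hx0 p), one_mul]
    obtain ⟨t, rfl⟩ : ∃ t, s = t + 1 := ⟨s-1, by omega⟩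
    rw [rho, rres, hz, herase, Polynomial.eval_mul, Polynomial.eval_pow, Polynomial.eval_X]
    simp only [Nat.add_sub_cancel]
    have hxz : x p * zpt x p = -1 := by
      rw [zpt, mul_neg, mul_inv_cancel₀ (hx0 p)]
    linear_combination ((Rpol x y).eval (zpt x p)
      * (∏ q ∈ Finset.univ.erase p, (zpt x p - zpt x q)⁻¹)
      * (∏ q, (x q)⁻¹) * (zpt x p)^t) * hxz
  rw [Finset.sum_congr rfl fun p _ => hterm p, ← Finset.mul_sum,
    lagrange_sum_zero (zpt x) (zpt_inj hx0 hinj) hn _ hdG, mul_zero]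

end PartB
section PartC

lemma erase_eq_Iio_union_Ioi {n : ℕ} (p : Fin n) :
    (Finset.univ.erase p) = Finset.Iio p ∪ Finset.Ioi p := by
  ext q
  simp only [Finset.mem_erase, Finset.mem_univ, and_true, Finset.mem_union, Finset.mem_Iio,
    Finset.mem_Ioi]
  exact ne_iff_lt_or_gt

lemma prod_erase_pairs {n : ℕ} (f : Fin n → Fin n → ℂ) :
    ∏ p, ∏ q ∈ Finset.univ.erase p, f p q
      = ∏ i, ∏ j ∈ Finset.Ioi i, (f i j * f j i) := by
  have h1 : ∀ p : Fin n, ∏ q ∈ Finset.univ.erase p, f p q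
      = (∏ q ∈ Finset.Iio p, f p q) * ∏ q ∈ Finset.Ioi p, f p q := by
    intro p
    rw [erase_eq_Iio_union_Ioi, Finset.prod_union]
    exact Finset.disjoint_left.mpr fun a ha hb =>
      absurd (Finset.mem_Ioi.mp hb) (not_lt.mpr (le_of_lt (Finset.mem_Iio.mp ha)))
  rw [Finset.prod_congr rfl fun p _ => h1 p, Finset.prod_mul_distrib]
  have h2 : ∏ p, ∏ q ∈ Finset.Iio p, f p q = ∏ i, ∏ j ∈ Finset.Ioi i, f j i := by
    apply Finset.prod_comm' (t := fun p => Finset.Iio p) (s' := fun q => Finset.Ioi q)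
    intro p q
    simp only [Finset.mem_univ, true_and, and_true, Finset.mem_Iio, Finset.mem_Ioi]
  rw [h2]
  rw [Finset.prod_congr rfl fun i (_ : i ∈ Finset.univ) => (Finset.prod_mul_distrib :
    ∏ j ∈ Finset.Ioi i, (f i j * f j i) = _), Finset.prod_mul_distrib]
  ring

lemma prod_pairs_pow {n : ℕ} (hn : 0 < n) (g : Fin n → ℂ) (hg : ∀ p, g p ≠ 0) :
    ∏ i, ∏ j ∈ Finset.Ioi i, (g i * g j) = (∏ p, g p) ^ (n - 1) := by
  have h1 : ∏ i, ∏ j ∈ Finset.Ioi i, (g i * g j)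
      = ∏ p, ∏ q ∈ Finset.univ.erase p, g q := by
    rw [prod_erase_pairs (fun p q => g q)]
    exact Finset.prod_congr rfl fun i _ => Finset.prod_congr rfl fun j _ => (mul_comm _ _)
  rw [h1]
  have h2 : ∀ p : Fin n, ∏ q ∈ Finset.univ.erase p, g q = (g p)⁻¹ * ∏ q, g q := by
    intro p
    rw [← Finset.mul_prod_erase _ g (Finset.mem_univ p), ← mul_assoc,
      inv_mul_cancel₀ (hg p), one_mul]
  rw [Finset.prod_congr rfl fun p _ => h2 p, Finset.prod_mul_distrib, Finset.prod_const,
    Finset.card_univ, Fintype.card_fin, Finset.prod_inv_distrib]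
  have hP : (∏ p, g p) ≠ 0 := Finset.prod_ne_zero_iff.mpr fun p _ => hg p
  rw [show (∏ p, g p) ^ n = (∏ p, g p) ^ (n - 1) * (∏ p, g p) by
    rw [← pow_succ]; congr 1; omega]
  rw [mul_comm, mul_assoc, mul_inv_cancel₀ hP, mul_one]

lemma plen_rect (n c : ℕ) (hn : 0 < n) (hc : 0 < c) :
    plen (fun i => if i < n then c else 0) = n := by
  unfold plen
  have hmem : n ∈ {N | ∀ i, N ≤ i → (if i < n then c else 0) = 0} := by
    intro i hi
    exact if_neg (by omega)
  apply le_antisymm (Nat.sInf_le hmem)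
  apply le_csInf ⟨n, hmem⟩
  intro N hN
  by_contra h
  push_neg at h
  have h2 := hN (n-1) (by omega)
  rw [if_pos (by omega)] at h2
  omega

lemma coe_Bpol {m : ℕ} (y : Fin m → ℂ) :
    ((Bpol y : Polynomial ℂ) : PowerSeries ℂ)
      = ∏ j, (1 + PowerSeries.C (y j) * PowerSeries.X) := by
  rw [Bpol, ← Polynomial.coeToPowerSeries.ringHom_apply,
    map_prod (Polynomial.coeToPowerSeries.ringHom : Polynomial ℂ →+* PowerSeries ℂ)]
  apply Finset.prod_congr rfl
  intro j _
  rw [Polynomial.coeToPowerSeries.ringHom_apply]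
  simp only [Polynomial.coe_add, Polynomial.coe_one, Polynomial.coe_mul, Polynomial.coe_C,
    Polynomial.coe_X]

lemma entry_eval {n m : ℕ} (l : ℕ) (x : Fin n → ℂ) (y : Fin m → ℂ)
    (hx0 : ∀ p, x p ≠ 0) (hinj : Function.Injective x) (hn : 0 < n) (r : ℤ)
    (hr : (m : ℤ) + l - n + 1 ≤ r) :
    MvPolynomial.aeval
      (fun k : ℕ+ => (∑ i, (fun i => -x i) i ^ (k:ℕ)) + (-1:ℂ) ^ ((k:ℕ) - 1) * ∑ j, y j ^ (k:ℕ))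
      (hZ r)
    = ∑ p, rho x y p * (-(x p)) ^ r := by
  by_cases h0 : 0 ≤ r
  · rw [hZ, if_pos h0]
    rw [aeval_c_hSym (fun i => -x i) y r.toNat]
    have hser : (∏ j, (1 + PowerSeries.C (y j) * PowerSeries.X))
        * (∏ i, PowerSeries.mk fun N => (fun i => -x i) i ^ N) = Fser x y := by
      rw [Fser, coe_Bpol, Gser]
    rw [hser, coeffF_big x y hx0 hinj hn r.toNat (by omega)]
    apply Finset.sum_congr rfl
    intro p _
    rw [← zpow_natCast (-(x p)) r.toNat, Int.toNat_of_nonneg h0]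
  · rw [hZ, if_neg h0, map_zero]
    push_neg at h0
    set s : ℕ := (-r).toNat with hs
    have hrs : r = -(s : ℤ) := by omega
    have h1 : ∀ p, (-(x p)) ^ r = ((-(x p))⁻¹) ^ s := by
      intro p
      rw [hrs, zpow_neg, ← inv_zpow, zpow_natCast]
    rw [Finset.sum_congr rfl fun p _ => by rw [h1 p]]
    exact (sum_rho_neg x y hx0 hinj s (by omega) (by omega)).symm

end PartC
section PartD

set_option maxHeartbeats 1000000 in
theorem main_generic {n m : ℕ} (l : ℕ) (hn : 0 < n) (hml : 0 < m + l)
    (x : Fin n → ℂ) (y : Fin m → ℂ) (hx0 : ∀ p, x p ≠ 0) (hinj : Function.Injective x) :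
    LSC (fun i => if i < n then m + l else 0) (fun i => -x i) y
      = (∏ i, -x i) ^ l * ∏ i, ∏ j, (y j - x i) := by
  have hschur : schurF (fun i => if i < n then m + l else 0)
      = schurSym n (fun i => if i < n then m + l else 0) := by
    rw [schurF, plen_rect n (m+l) hn hml]
  rw [LSC, hschur, schurSym]
  set c : ℕ+ → ℂ := fun k : ℕ+ =>
    (∑ i, (fun i => -x i) i ^ (k:ℕ)) + (-1:ℂ) ^ ((k:ℕ) - 1) * ∑ j, y j ^ (k:ℕ) with hc
  set Amat : Matrix (Fin n) (Fin n) SymF := Matrix.of fun i j : Fin n =>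
    hZ (((if (i:ℕ) < n then m + l else 0 : ℕ) : ℤ) - ((i:ℕ):ℤ) + ((j:ℕ):ℤ)) with hAmat
  rw [show (MvPolynomial.aeval c) Amat.det
      = (((MvPolynomial.aeval c).toRingHom.mapMatrix Amat)).det from RingHom.map_det _ _]
  have hE : ((MvPolynomial.aeval c).toRingHom.mapMatrix Amat)
      = Matrix.of (fun i j : Fin n =>
          ∑ p, rho x y p * (-(x p)) ^ ((((m+l : ℕ)):ℤ) - ((i:ℕ):ℤ) + ((j:ℕ):ℤ))) := by
    ext i j
    simp only [RingHom.mapMatrix_apply, Matrix.map_apply, Matrix.of_apply, hAmat,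
      AlgHom.coe_toRingHom]
    rw [show ((if (i:ℕ) < n then m + l else 0 : ℕ) : ℤ) = ((m+l : ℕ) : ℤ) by
      rw [if_pos i.isLt]]
    exact entry_eval l x y hx0 hinj hn _ (by
      have hi := i.isLt
      push_cast
      omega)
  rw [hE]
  -- factor the matrix
  set κ : Fin n → ℂ := fun p => rho x y p * (-(x p)) ^ (((m+l : ℕ)):ℤ) with hκdef
  have hfact : Matrix.of (fun i j : Fin n =>
        ∑ p, rho x y p * (-(x p)) ^ ((((m+l : ℕ)):ℤ) - ((i:ℕ):ℤ) + ((j:ℕ):ℤ)))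
      = (Matrix.of fun (i p : Fin n) => κ p * (zpt x p) ^ ((i:ℕ)))
          * Matrix.vandermonde (fun p => -(x p)) := by
    ext i j
    rw [Matrix.mul_apply]
    simp only [Matrix.of_apply]
    apply Finset.sum_congr rfl
    intro p _
    simp only [Matrix.of_apply, Matrix.vandermonde_apply, hκdef]
    have hne : (-(x p)) ≠ 0 := neg_ne_zero.mpr (hx0 p)
    have hzp : zpt x p = (-(x p))⁻¹ := by rw [zpt, inv_neg]
    have key : ∀ (A R : ℂ), A ≠ 0 → ∀ i j : ℕ,
        R * A ^ ((((m+l : ℕ)):ℤ) - (i:ℤ) + (j:ℤ)) = (R * A ^ (((m+l : ℕ)):ℤ) * (A⁻¹)^i) * A^j := by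
      intro A R hA i j
      rw [show ((((m+l : ℕ)):ℤ) - (i:ℤ) + (j:ℤ))
          = (((m+l : ℕ)):ℤ) + (-(i:ℤ)) + (j:ℤ) by ring]
      rw [zpow_add₀ hA, zpow_add₀ hA, zpow_neg, zpow_natCast, zpow_natCast, zpow_natCast, inv_pow]
      ring
    rw [key (-(x p)) (rho x y p) hne (i:ℕ) (j:ℕ), hzp]
  rw [hfact, Matrix.det_mul]
  have hdetU : (Matrix.of fun (i p : Fin n) => κ p * (zpt x p) ^ ((i:ℕ))).det
      = (∏ p, κ p) * (Matrix.vandermonde (zpt x)).det := by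
    have h : Matrix.of (fun (i p : Fin n) => κ p * (zpt x p) ^ ((i:ℕ)))
        = (Matrix.vandermonde (zpt x)).transpose * Matrix.diagonal κ := by
      ext i p
      rw [Matrix.mul_diagonal, Matrix.transpose_apply, Matrix.vandermonde_apply]
      simp only [Matrix.of_apply]
      ring
    rw [h, Matrix.det_mul, Matrix.det_transpose, Matrix.det_diagonal, mul_comm]
  rw [hdetU, Matrix.det_vandermonde, Matrix.det_vandermonde]
  -- scalar evaluation of κ
  have hκ : ∀ p, κ p = ((-(x p))^l * ∏ j, (y j - x p))
      * ((x p)^(n-1) * ∏ q ∈ Finset.univ.erase p, (x p - x q)⁻¹) := by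
    intro p
    have hzp : zpt x p = -(x p)⁻¹ := rfl
    have hBe : (Bpol y).eval (zpt x p) * (-(x p))^m = ∏ j, (y j - x p) := by
      rw [Bpol, Polynomial.eval_prod,
        show (-(x p))^m = ∏ _j : Fin m, (-(x p)) by
          rw [Finset.prod_const, Finset.card_univ, Fintype.card_fin],
        ← Finset.prod_mul_distrib]
      apply Finset.prod_congr rfl
      intro j _
      rw [Polynomial.eval_add, Polynomial.eval_one, Polynomial.eval_mul, Polynomial.eval_C,
        Polynomial.eval_X, hzp]
      have h1 : x p * (x p)⁻¹ = 1 := mul_inv_cancel₀ (hx0 p)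
      linear_combination (y j) * h1
    have h3 : (∏ q ∈ Finset.univ.erase p, (zpt x p - zpt x q)⁻¹)
        * (∏ q ∈ Finset.univ.erase p, (x q)⁻¹)
        = (x p)^(n-1) * ∏ q ∈ Finset.univ.erase p, (x p - x q)⁻¹ := by
      rw [← Finset.prod_mul_distrib]
      have hfr : ∀ q ∈ Finset.univ.erase p,
          (zpt x p - zpt x q)⁻¹ * (x q)⁻¹ = x p * (x p - x q)⁻¹ := by
        intro q hq
        have hqp : q ≠ p := (Finset.mem_erase.mp hq).1
        have hne : x p - x q ≠ 0 := sub_ne_zero.mpr fun h => hqp (hinj h.symm)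
        have hzz : zpt x p - zpt x q = (x p - x q) * ((x p)⁻¹ * (x q)⁻¹) := by
          rw [zpt, zpt]
          have h1 : x p * (x p)⁻¹ = 1 := mul_inv_cancel₀ (hx0 p)
          have h2 : x q * (x q)⁻¹ = 1 := mul_inv_cancel₀ (hx0 q)
          linear_combination (-(x q)⁻¹) * h1 + ((x p)⁻¹) * h2
        rw [hzz, mul_inv, mul_inv, inv_inv, inv_inv]
        linear_combination (x p * (x p - x q)⁻¹) * (mul_inv_cancel₀ (hx0 q))
      rw [Finset.prod_congr rfl hfr, Finset.prod_mul_distrib, Finset.prod_const,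
        Finset.card_erase_of_mem (Finset.mem_univ p), Finset.card_univ, Fintype.card_fin]
    have hpow : (-(x p)) ^ (((m+l : ℕ)):ℤ) = (-(x p))^m * (-(x p))^l := by
      rw [zpow_natCast, pow_add]
    rw [hκdef]
    simp only
    rw [rho, rres, eval_Rpol_z, hpow]
    linear_combination
      ((-(x p))^l * ((∏ q ∈ Finset.univ.erase p, (zpt x p - zpt x q)⁻¹)
        * (∏ q ∈ Finset.univ.erase p, (x q)⁻¹))) * hBe
      + ((-(x p))^l * (∏ j, (y j - x p))) * h3
  -- global products
  have hxne : ∀ p : Fin n, x p ≠ 0 := hx0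
  have hP : (∏ p, x p) ≠ 0 := Finset.prod_ne_zero_iff.mpr fun p _ => hx0 p
  have hD1 : (∏ i, ∏ j ∈ Finset.Ioi i, (x i - x j)) ≠ 0 :=
    Finset.prod_ne_zero_iff.mpr fun i _ => Finset.prod_ne_zero_iff.mpr fun j hj =>
      sub_ne_zero.mpr fun h => (Finset.mem_Ioi.mp hj).ne' (hinj h).symm
  have hD2 : (∏ i, ∏ j ∈ Finset.Ioi i, (x j - x i)) ≠ 0 :=
    Finset.prod_ne_zero_iff.mpr fun i _ => Finset.prod_ne_zero_iff.mpr fun j hj =>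
      sub_ne_zero.mpr fun h => (Finset.mem_Ioi.mp hj).ne' (hinj h)
  have hVx : (∏ i, ∏ j ∈ Finset.Ioi i, (-(x j) - -(x i)))
      = ∏ i, ∏ j ∈ Finset.Ioi i, (x i - x j) := by
    apply Finset.prod_congr rfl
    intro i _
    apply Finset.prod_congr rfl
    intro j _
    ring
  have hVz : (∏ i, ∏ j ∈ Finset.Ioi i, (zpt x j - zpt x i))
      = (∏ i, ∏ j ∈ Finset.Ioi i, (x j - x i)) * ((∏ p, x p)⁻¹) ^ (n-1) := by
    have hzz : ∀ i : Fin n, ∀ j ∈ Finset.Ioi i,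
        zpt x j - zpt x i = (x j - x i) * ((x i)⁻¹ * (x j)⁻¹) := by
      intro i j _
      rw [zpt, zpt]
      have h1 : x i * (x i)⁻¹ = 1 := mul_inv_cancel₀ (hx0 i)
      have h2 : x j * (x j)⁻¹ = 1 := mul_inv_cancel₀ (hx0 j)
      linear_combination (-(x i)⁻¹) * h2 + ((x j)⁻¹) * h1
    rw [Finset.prod_congr rfl fun i _ => Finset.prod_congr rfl (hzz i)]
    rw [Finset.prod_congr rfl fun i (_ : i ∈ Finset.univ) => (Finset.prod_mul_distrib :
      ∏ j ∈ Finset.Ioi i, ((x j - x i) * ((x i)⁻¹ * (x j)⁻¹)) = _), Finset.prod_mul_distrib]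
    congr 1
    rw [prod_pairs_pow hn (fun p => (x p)⁻¹) (fun p => inv_ne_zero (hx0 p)),
      ← Finset.prod_inv_distrib]
  have hK : (∏ p, κ p) = ((∏ p, (-(x p))^l * ∏ j, (y j - x p)))
      * ((∏ p, x p)^(n-1)
        * ((∏ i, ∏ j ∈ Finset.Ioi i, (x i - x j)) * ∏ i, ∏ j ∈ Finset.Ioi i, (x j - x i))⁻¹) := by
    rw [Finset.prod_congr rfl fun p _ => hκ p, Finset.prod_mul_distrib]
    congr 1
    rw [Finset.prod_mul_distrib, Finset.prod_pow]
    congr 1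
    rw [Finset.prod_congr rfl fun p (_ : p ∈ Finset.univ) => (Finset.prod_inv_distrib _ :
      ∏ q ∈ Finset.univ.erase p, (x p - x q)⁻¹ = _), Finset.prod_inv_distrib]
    rw [prod_erase_pairs (fun p q => x p - x q)]
    rw [Finset.prod_congr rfl fun i (_ : i ∈ Finset.univ) => (Finset.prod_mul_distrib :
      ∏ j ∈ Finset.Ioi i, ((x i - x j) * (x j - x i)) = _), Finset.prod_mul_distrib]
  rw [hK, hVz, hVx]
  have hT : (∏ p, (-(x p))^l * ∏ j, (y j - x p))
      = (∏ i, -x i) ^ l * ∏ i, ∏ j, (y j - x i) := by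
    rw [Finset.prod_mul_distrib, Finset.prod_pow]
  rw [← hT]
  field_simp
  ring_nf
  rw [inv_pow, mul_assoc, mul_inv_cancel₀ (pow_ne_zero _ hP), mul_one]

end PartD
section PartE

lemma LSC_trivial {a b : ℕ} (lam : ℕ → ℕ) (hlam : ∀ i, lam i = 0)
    (x : Fin a → ℂ) (y : Fin b → ℂ) : LSC lam x y = 1 := by
  have hplen : plen lam = 0 := by
    unfold plen
    exact Nat.sInf_eq_zero.mpr (Or.inl fun i _ => hlam i)
  rw [LSC, schurF, hplen, schurSym, Matrix.det_isEmpty, map_one]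

lemma eval_aeval {τ : Type} (σ : τ → ℂ) (f : ℕ+ → MvPolynomial τ ℂ) (p : SymF) :
    MvPolynomial.eval σ (MvPolynomial.aeval f p)
      = MvPolynomial.aeval (fun k => MvPolynomial.eval σ (f k)) p := by
  have h := MvPolynomial.comp_aeval (R := ℚ) f
      (((MvPolynomial.aeval σ : MvPolynomial τ ℂ →ₐ[ℂ] ℂ)).restrictScalars ℚ)
  have h2 := DFunLike.congr_fun h p
  simp only [AlgHom.coe_comp, Function.comp_apply, AlgHom.coe_restrictScalars',
    MvPolynomial.coe_aeval_eq_eval] at h2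
  exact h2

end PartE
/-- For `X` of `n` variables, `Y` of `m` variables and any `l ≥ 0`:
`LS_{⟨(m+l)ⁿ⟩}(-X; Y) = (∏_{x ∈ X} (-x))^l · ∏_{x ∈ X, y ∈ Y} (y - x)`. -/
theorem littlewood_schur_rectangle (n m l : ℕ) (x : Fin n → ℂ) (y : Fin m → ℂ) :
    LSC (fun i => if i < n then m + l else 0) (fun i => -x i) y =
      (∏ i, -x i) ^ l * ∏ i, ∏ j, (y j - x i) := by
  by_cases hml : m + l = 0
  · obtain ⟨hm, hl⟩ := Nat.add_eq_zero.mp hml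
    subst hm; subst hl
    rw [LSC_trivial _ (fun i => by by_cases h : i < n <;> simp [h])]
    simp
  by_cases hn : n = 0
  · subst hn
    rw [LSC_trivial _ (fun i => if_neg (Nat.not_lt_zero i))]
    simp
  have hn' : 0 < n := Nat.pos_of_ne_zero hn
  have hml' : 0 < m + l := Nat.pos_of_ne_zero hml
  classical
  set lam : ℕ → ℕ := fun i => if i < n then m + l else 0 with hlam
  set cP : ℕ+ → MvPolynomial (Fin n ⊕ Fin m) ℂ := fun k =>
    (∑ i, (fun i => -MvPolynomial.X (Sum.inl i)) i ^ (k:ℕ))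
      + (-1 : MvPolynomial (Fin n ⊕ Fin m) ℂ) ^ ((k:ℕ)-1)
        * ∑ j, MvPolynomial.X (Sum.inr j) ^ (k:ℕ) with hcP
  set L : MvPolynomial (Fin n ⊕ Fin m) ℂ := MvPolynomial.aeval cP (schurF lam) with hL
  set Rp : MvPolynomial (Fin n ⊕ Fin m) ℂ :=
    (∏ i, -MvPolynomial.X (Sum.inl i))^l
      * ∏ i, ∏ j, (MvPolynomial.X (Sum.inr j) - MvPolynomial.X (Sum.inl i)) with hRp
  have hevalL : ∀ (x' : Fin n → ℂ) (y' : Fin m → ℂ),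
      MvPolynomial.eval (Sum.elim x' y') L = LSC lam (fun i => -x' i) y' := by
    intro x' y'
    rw [hL, eval_aeval, LSC]
    have hfun : (fun k : ℕ+ => MvPolynomial.eval (Sum.elim x' y') (cP k))
        = fun k : ℕ+ => (∑ i, (fun i => -x' i) i ^ (k:ℕ))
            + (-1:ℂ) ^ ((k:ℕ)-1) * ∑ j, y' j ^ (k:ℕ) := by
      funext k
      simp [hcP]
    rw [hfun]
  have hevalR : ∀ (x' : Fin n → ℂ) (y' : Fin m → ℂ),
      MvPolynomial.eval (Sum.elim x' y') Rp
        = (∏ i, -x' i) ^ l * ∏ i, ∏ j, (y' j - x' i) := by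
    intro x' y'
    rw [hRp]
    simp
  set g : MvPolynomial (Fin n ⊕ Fin m) ℂ :=
    (∏ p, MvPolynomial.X (Sum.inl p))
      * ∏ i, ∏ j ∈ Finset.Ioi i,
          (MvPolynomial.X (Sum.inl i) - MvPolynomial.X (Sum.inl j)) with hg
  have hgeval : ∀ σ : (Fin n ⊕ Fin m) → ℂ, MvPolynomial.eval σ g
      = (∏ p, σ (Sum.inl p)) * ∏ i, ∏ j ∈ Finset.Ioi i,
          (σ (Sum.inl i) - σ (Sum.inl j)) := by
    intro σ
    rw [hg]
    simp
  have hmain : g * (L - Rp) = 0 := by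
    apply MvPolynomial.funext
    intro σ
    rw [map_mul, map_sub, map_zero]
    by_cases hgz : MvPolynomial.eval σ g = 0
    · rw [hgz, zero_mul]
    · have hσ : Sum.elim (σ ∘ Sum.inl) (σ ∘ Sum.inr) = σ := by
        funext s; cases s <;> rfl
      rw [hgeval σ] at hgz
      obtain ⟨hg1, hg2⟩ := mul_ne_zero_iff.mp hgz
      have hx0 : ∀ p, (σ ∘ Sum.inl) p ≠ 0 := fun p =>
        Finset.prod_ne_zero_iff.mp hg1 p (Finset.mem_univ p)
      have hinj : Function.Injective (σ ∘ Sum.inl) := by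
        intro a b hab
        by_contra hne
        rcases Ne.lt_or_gt hne with hlt | hlt
        · have h1 := Finset.prod_ne_zero_iff.mp hg2 a (Finset.mem_univ a)
          have h2 := Finset.prod_ne_zero_iff.mp h1 b (Finset.mem_Ioi.mpr hlt)
          exact h2 (sub_eq_zero.mpr hab)
        · have h1 := Finset.prod_ne_zero_iff.mp hg2 b (Finset.mem_univ b)
          have h2 := Finset.prod_ne_zero_iff.mp h1 a (Finset.mem_Ioi.mpr hlt)
          exact h2 (sub_eq_zero.mpr hab.symm)
      have hmg := main_generic l hn' hml' (σ ∘ Sum.inl) (σ ∘ Sum.inr) hx0 hinj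
      have hLe := hevalL (σ ∘ Sum.inl) (σ ∘ Sum.inr)
      have hRe := hevalR (σ ∘ Sum.inl) (σ ∘ Sum.inr)
      rw [hσ] at hLe hRe
      rw [hLe, hRe, hmg, sub_self, mul_zero]
  have hgne : g ≠ 0 := by
    intro h0
    have heval := congrArg
      (MvPolynomial.eval (Sum.elim (fun p : Fin n => ((p:ℕ):ℂ)+1) (fun _ : Fin m => (0:ℂ)))) h0
    rw [map_zero, hgeval] at heval
    have h1 : (∏ p : Fin n, (Sum.elim (fun p : Fin n => ((p:ℕ):ℂ)+1) (fun _ : Fin m => (0:ℂ)))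
        (Sum.inl p)) ≠ 0 := by
      apply Finset.prod_ne_zero_iff.mpr
      intro p _
      simp only [Sum.elim_inl]
      intro hc
      have : (((p:ℕ)+1 : ℕ) : ℂ) = 0 := by push_cast; linear_combination hc
      exact Nat.cast_ne_zero.mpr (Nat.succ_ne_zero _) this
    have h2 : (∏ i : Fin n, ∏ j ∈ Finset.Ioi i,
        ((Sum.elim (fun p : Fin n => ((p:ℕ):ℂ)+1) (fun _ : Fin m => (0:ℂ))) (Sum.inl i)
          - (Sum.elim (fun p : Fin n => ((p:ℕ):ℂ)+1) (fun _ : Fin m => (0:ℂ))) (Sum.inl j))) ≠ 0 := by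
      apply Finset.prod_ne_zero_iff.mpr
      intro i _
      apply Finset.prod_ne_zero_iff.mpr
      intro j hj
      simp only [Sum.elim_inl]
      intro hc
      have hij : ((i:ℕ) : ℂ) = ((j:ℕ) : ℂ) := by linear_combination hc
      have : (i:ℕ) = (j:ℕ) := Nat.cast_injective hij
      exact absurd (Fin.ext this) (Finset.mem_Ioi.mp hj).ne'.symm
    exact (mul_ne_zero h1 h2) heval
  have hLR : L = Rp := by
    rcases mul_eq_zero.mp hmain with h | h
    · exact absurd h hgne
    · exact sub_eq_zero.mp h
  have hfin := hevalL x y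
  rw [hLR, hevalR x y] at hfin
  exact hfin.symm
end

section
/- Fix a partition λ of length at most m+n. There is a bijection between staircase walks π from the top-right to the bottom-left corner of an n×m rectangle and pairs of partitions (μ,ν) with μ ⋆_{m,n} ν = λ, given by π ↦ (μ(π) + λ_{V(π)}, ν(π)' + λ_{H(π)}). Moreover the sign satisfies ε(μ,ν) = (−1)^{|ν(π)|} = (−1)^{mn − |μ(π)|}. -/
/-- `ρ_k = (k-1, …, 1, 0)` (0-indexed: `ρ_k(i) = k - 1 - i`). -/
def rhoSeq (k : ℕ) : Fin k → ℕ := fun i => k - 1 - (i : ℕ)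

/-- The concatenation `(μ + ρ_m) ∪ (ν + ρ_n)`. -/
def catSeq {m n : ℕ} (mu : Fin m → ℕ) (nu : Fin n → ℕ) : Fin (m + n) → ℕ :=
  Fin.append (fun i => mu i + rhoSeq m i) (fun j => nu j + rhoSeq n j)

/-- `λ` is the `(m,n)`-overlap of `μ` and `ν`: `λ + ρ_{m+n}` is a rearrangement
of the concatenation `(μ + ρ_m) ∪ (ν + ρ_n)`. -/
def IsOverlapOf {m n : ℕ} (mu : Fin m → ℕ) (nu : Fin n → ℕ)
    (lam : Fin (m + n) → ℕ) : Prop :=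
  ∃ σ : Equiv.Perm (Fin (m + n)), ∀ i, lam i + rhoSeq (m + n) i = catSeq mu nu (σ i)

/-- The sign `ε(μ,ν)` of the sorting permutation of the overlap (equal to `1`
if the overlap does not exist). -/
noncomputable def overlapSign {m n : ℕ} (mu : Fin m → ℕ) (nu : Fin n → ℕ)
    (lam : Fin (m + n) → ℕ) : ℤ :=
  if h : ∃ σ : Equiv.Perm (Fin (m + n)), ∀ i, lam i + rhoSeq (m + n) i = catSeq mu nu (σ i)
  then (Equiv.Perm.sign h.choose : ℤ) else 1

/-- Extend a finitely supported partition `Fin k → ℕ` to `ℕ → ℕ` by zeros. -/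
def finExtend {k : ℕ} (f : Fin k → ℕ) : ℕ → ℕ := fun i => if h : i < k then f ⟨i, h⟩ else 0

/-- A staircase walk from the top-right to the bottom-left corner of an `n × m`
rectangle (using only west and south steps) is encoded by the set `V` of times
of its `m` vertical (south) steps among its `m + n` steps. `vEnum V i` is the
time of the `i`-th vertical step. -/
def vEnum {m n : ℕ} (V : {V : Finset (Fin (m + n)) // V.card = m}) :
    Fin m → Fin (m + n) :=
  fun i => (V.1.orderIsoOfFin V.2 i).1

/-- The time of the `j`-th horizontal (west) step of the staircase walk. -/
def hEnum {m n : ℕ} (V : {V : Finset (Fin (m + n)) // V.card = m}) :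
    Fin n → Fin (m + n) :=
  fun j => ((V.1ᶜ).orderIsoOfFin
    (by rw [Finset.card_compl, V.2, Fintype.card_fin]; try omega) j).1

/-- The partition `μ(π)` lying above the staircase walk: its `i`-th row is the
number of horizontal steps taken after the `i`-th vertical step. -/
def muWalk {m n : ℕ} (V : {V : Finset (Fin (m + n)) // V.card = m}) : Fin m → ℕ :=
  fun i => ((V.1ᶜ).filter (fun t => vEnum V i < t)).card

/-- The conjugate `ν(π)'` of the partition `ν(π)` lying (rotated by 180°) below
the staircase walk: its `j`-th column is the number of vertical steps taken
after the `j`-th horizontal step. -/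
def nuConjWalk {m n : ℕ} (V : {V : Finset (Fin (m + n)) // V.card = m}) : Fin n → ℕ :=
  fun j => (V.1.filter (fun t => hEnum V j < t)).card

/-- The pair of partitions `(μ(π) + λ_{V(π)}, ν(π)' + λ_{H(π)})` associated to a
staircase walk `π` (encoded by its set `V` of vertical-step times) and a
labelling partition `λ`. -/
def walkPair {m n : ℕ} (lam : Fin (m + n) → ℕ)
    (V : {V : Finset (Fin (m + n)) // V.card = m}) : (Fin m → ℕ) × (Fin n → ℕ) :=
  (fun i => muWalk V i + lam (vEnum V i), fun j => nuConjWalk V j + lam (hEnum V j))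

/- ====== auxiliary development ====== -/

section Enum

variable {N k : ℕ}

def sEnum (s : Finset (Fin N)) (hs : s.card = k) : Fin k → Fin N :=
  fun i => (s.orderIsoOfFin hs i).1

lemma sEnum_strictMono (s : Finset (Fin N)) (hs : s.card = k) :
    StrictMono (sEnum s hs) := (s.orderEmbOfFin hs).strictMono

lemma sEnum_mem (s : Finset (Fin N)) (hs : s.card = k) (i : Fin k) :
    sEnum s hs i ∈ s := Finset.orderEmbOfFin_mem _ hs _

lemma s_eq_image (s : Finset (Fin N)) (hs : s.card = k) :
    s = Finset.image (sEnum s hs) Finset.univ := by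
  refine (Finset.eq_of_subset_of_card_le ?_ ?_).symm
  · intro t ht
    simp only [Finset.mem_image, Finset.mem_univ, true_and] at ht
    obtain ⟨i, rfl⟩ := ht
    exact sEnum_mem s hs i
  · rw [Finset.card_image_of_injective _ (sEnum_strictMono s hs).injective, hs,
      Finset.card_univ, Fintype.card_fin]

lemma card_filter_sEnum (s : Finset (Fin N)) (hs : s.card = k)
    (p : Fin N → Prop) [DecidablePred p] :
    (s.filter p).card = (Finset.univ.filter fun i => p (sEnum s hs i)).card := by
  refine (Finset.card_bij (fun i _ => sEnum s hs i) ?_ ?_ ?_).symm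
  · intro i hi
    simp only [Finset.mem_filter] at hi ⊢
    exact ⟨sEnum_mem s hs i, hi.2⟩
  · intro a ha b hb hab
    exact (sEnum_strictMono s hs).injective hab
  · intro t ht
    simp only [Finset.mem_filter] at ht
    have : t ∈ Finset.image (sEnum s hs) Finset.univ := by rw [← s_eq_image s hs]; exact ht.1
    simp only [Finset.mem_image, Finset.mem_univ, true_and] at this
    obtain ⟨i, rfl⟩ := this
    exact ⟨i, by simp [ht.2]⟩

lemma card_filter_lt_univ (a : Fin N) :
    ((Finset.univ : Finset (Fin N)).filter fun t => a < t).card = N - 1 - a := by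
  have : (Finset.univ : Finset (Fin N)).filter (fun t => a < t) = Finset.Ioi a := by
    ext t; simp
  rw [this, Fin.card_Ioi]

lemma card_filter_gt_sEnum (s : Finset (Fin N)) (hs : s.card = k) (i : Fin k) :
    (s.filter fun t => sEnum s hs i < t).card = k - 1 - i := by
  rw [card_filter_sEnum s hs]
  have : (Finset.univ.filter fun j => sEnum s hs i < sEnum s hs j)
      = Finset.univ.filter fun j => i < j := by
    apply Finset.filter_congr
    intro j _
    simp [(sEnum_strictMono s hs).lt_iff_lt]
  rw [this, card_filter_lt_univ]

lemma card_split (s : Finset (Fin N)) (p : Fin N → Prop) [DecidablePred p] :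
    (s.filter p).card + (sᶜ.filter p).card = (Finset.univ.filter p).card := by
  rw [← Finset.card_union_of_disjoint
      (Finset.disjoint_filter_filter disjoint_compl_right),
    ← Finset.filter_union, Finset.union_compl]

lemma compl_count (s : Finset (Fin N)) (hs : s.card = k) (i : Fin k) :
    (sᶜ.filter fun t => sEnum s hs i < t).card + (k - 1 - (i : ℕ))
      = N - 1 - (sEnum s hs i : ℕ) := by
  have h1 := card_split s (fun t => sEnum s hs i < t)
  rw [card_filter_gt_sEnum s hs i, card_filter_lt_univ] at h1
  omega

end Enum

section Walk

variable {m n : ℕ}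

lemma hcard (V : {V : Finset (Fin (m + n)) // V.card = m}) : (V.1ᶜ).card = n := by
  rw [Finset.card_compl, V.2, Fintype.card_fin]; omega

lemma vEnum_eq (V : {V : Finset (Fin (m + n)) // V.card = m}) :
    vEnum V = sEnum V.1 V.2 := rfl

lemma hEnum_eq (V : {V : Finset (Fin (m + n)) // V.card = m}) :
    hEnum V = sEnum V.1ᶜ (hcard V) := rfl

lemma vEnum_strictMono (V : {V : Finset (Fin (m + n)) // V.card = m}) :
    StrictMono (vEnum V) := sEnum_strictMono V.1 V.2

lemma hEnum_strictMono (V : {V : Finset (Fin (m + n)) // V.card = m}) :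
    StrictMono (hEnum V) := sEnum_strictMono V.1ᶜ (hcard V)

lemma vEnum_mem (V : {V : Finset (Fin (m + n)) // V.card = m}) (i : Fin m) :
    vEnum V i ∈ V.1 := sEnum_mem V.1 V.2 i

lemma hEnum_mem (V : {V : Finset (Fin (m + n)) // V.card = m}) (j : Fin n) :
    hEnum V j ∈ V.1ᶜ := sEnum_mem V.1ᶜ (hcard V) j

lemma vEnum_ne_hEnum (V : {V : Finset (Fin (m + n)) // V.card = m}) (i : Fin m) (j : Fin n) :
    vEnum V i ≠ hEnum V j := by
  intro h
  have h1 := vEnum_mem V i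
  have h2 := hEnum_mem V j
  rw [h] at h1
  exact (Finset.mem_compl.mp h2) h1

lemma muWalk_rho (V : {V : Finset (Fin (m + n)) // V.card = m}) (i : Fin m) :
    muWalk V i + rhoSeq m i = rhoSeq (m + n) (vEnum V i) := by
  have := compl_count V.1 V.2 i
  exact this

lemma nuConj_rho (V : {V : Finset (Fin (m + n)) // V.card = m}) (j : Fin n) :
    nuConjWalk V j + rhoSeq n j = rhoSeq (m + n) (hEnum V j) := by
  have := compl_count V.1ᶜ (hcard V) j
  rw [compl_compl] at this
  exact this

end Walk

section Perm

open Equiv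

variable {m n : ℕ}

/-- `λ + ρ`. -/
def fSeq {k : ℕ} (lam : Fin k → ℕ) : Fin k → ℕ := fun t => lam t + rhoSeq k t

lemma fSeq_strictAnti {k : ℕ} {lam : Fin k → ℕ} (hlam : Antitone lam) :
    StrictAnti (fSeq lam) := by
  intro a b hab
  have h1 : lam b ≤ lam a := hlam hab.le
  have h2 : (a : ℕ) < b := hab
  have h3 : (b : ℕ) < k := b.2
  simp only [fSeq, rhoSeq]
  omega

def walkSum {m n : ℕ} (V : {V : Finset (Fin (m + n)) // V.card = m}) :
    Sum (Fin m) (Fin n) → Fin (m + n) :=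
  Sum.elim (vEnum V) (hEnum V)

lemma walkSum_bijective (V : {V : Finset (Fin (m + n)) // V.card = m}) :
    Function.Bijective (walkSum V) := by
  rw [Fintype.bijective_iff_injective_and_card]
  constructor
  · intro a b hab
    match a, b with
    | Sum.inl i, Sum.inl i' => exact congrArg _ ((vEnum_strictMono V).injective hab)
    | Sum.inr j, Sum.inr j' => exact congrArg _ ((hEnum_strictMono V).injective hab)
    | Sum.inl i, Sum.inr j => exact absurd hab (vEnum_ne_hEnum V i j)
    | Sum.inr j, Sum.inl i => exact absurd hab.symm (vEnum_ne_hEnum V i j)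
  · simp

noncomputable def walkPerm (V : {V : Finset (Fin (m + n)) // V.card = m}) :
    Equiv.Perm (Fin (m + n)) :=
  finSumFinEquiv.symm.trans (Equiv.ofBijective (walkSum V) (walkSum_bijective V))

@[simp] lemma walkPerm_castAdd (V : {V : Finset (Fin (m + n)) // V.card = m}) (i : Fin m) :
    walkPerm V (Fin.castAdd n i) = vEnum V i := by
  simp [walkPerm, walkSum, Equiv.ofBijective]

@[simp] lemma walkPerm_natAdd (V : {V : Finset (Fin (m + n)) // V.card = m}) (j : Fin n) :
    walkPerm V (Fin.natAdd m j) = hEnum V j := by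
  simp [walkPerm, walkSum, Equiv.ofBijective]

lemma catSeq_walkPair (lam : Fin (m + n) → ℕ) (V : {V : Finset (Fin (m + n)) // V.card = m})
    (t : Fin (m + n)) :
    catSeq (walkPair lam V).1 (walkPair lam V).2 t = fSeq lam (walkPerm V t) := by
  obtain ⟨s, rfl⟩ : ∃ s, finSumFinEquiv s = t := ⟨finSumFinEquiv.symm t, by simp⟩
  match s with
  | Sum.inl i =>
    rw [finSumFinEquiv_apply_left]
    have h1 : catSeq (walkPair lam V).1 (walkPair lam V).2 (Fin.castAdd n i)
        = (walkPair lam V).1 i + rhoSeq m i := Fin.append_left _ _ i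
    rw [h1, walkPerm_castAdd]
    show muWalk V i + lam (vEnum V i) + rhoSeq m i = fSeq lam (vEnum V i)
    have := muWalk_rho V i
    simp only [fSeq]
    omega
  | Sum.inr j =>
    rw [finSumFinEquiv_apply_right]
    have h1 : catSeq (walkPair lam V).1 (walkPair lam V).2 (Fin.natAdd m j)
        = (walkPair lam V).2 j + rhoSeq n j := Fin.append_right _ _ j
    rw [h1, walkPerm_natAdd]
    show nuConjWalk V j + lam (hEnum V j) + rhoSeq n j = fSeq lam (hEnum V j)
    have := nuConj_rho V j
    simp only [fSeq]
    omega

lemma walkPair_isOverlap (lam : Fin (m + n) → ℕ) (V : {V : Finset (Fin (m + n)) // V.card = m}) :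
    IsOverlapOf (walkPair lam V).1 (walkPair lam V).2 lam := by
  refine ⟨(walkPerm V).symm, fun t => ?_⟩
  rw [catSeq_walkPair lam V ((walkPerm V).symm t), Equiv.apply_symm_apply]
  rfl

lemma sigma_unique {lam : Fin (m + n) → ℕ} (hlam : Antitone lam)
    (V : {V : Finset (Fin (m + n)) // V.card = m}) (σ : Equiv.Perm (Fin (m + n)))
    (hσ : ∀ t, lam t + rhoSeq (m + n) t = catSeq (walkPair lam V).1 (walkPair lam V).2 (σ t)) :
    σ = (walkPerm V).symm := by
  apply Equiv.ext; intro t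
  have h1 := hσ t
  rw [catSeq_walkPair lam V (σ t)] at h1
  have h2 : fSeq lam t = fSeq lam (walkPerm V (σ t)) := h1
  have h3 := (fSeq_strictAnti hlam).injective h2
  exact (Equiv.eq_symm_apply _).mpr h3.symm

end Perm

section Sign

open Equiv Finset

lemma sign_eq_signAux' : ∀ {k : ℕ} (f : Equiv.Perm (Fin k)),
    Equiv.Perm.sign f = Equiv.Perm.signAux f
  | 0, f => by
    have : f = 1 := by apply Equiv.ext; intro x; exact x.elim0
    rw [this, Equiv.Perm.sign_one, Equiv.Perm.signAux_one]
  | 1, f => by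
    have : f = 1 := by
      apply Equiv.ext; intro x
      have : ∀ y : Fin 1, y = 0 := by decide
      exact (this _).trans (this _).symm
    rw [this, Equiv.Perm.sign_one, Equiv.Perm.signAux_one]
  | (k + 2), f => by
    have hsurj : Function.Surjective
        (MonoidHom.mk' Equiv.Perm.signAux Equiv.Perm.signAux_mul :
          Equiv.Perm (Fin (k + 2)) →* ℤˣ) := by
      intro u
      rcases Int.units_eq_one_or u with rfl | rfl
      · exact ⟨1, Equiv.Perm.signAux_one _⟩
      · exact ⟨Equiv.swap 0 1, Equiv.Perm.signAux_swap (zero_ne_one)⟩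
    have := Equiv.Perm.eq_sign_of_surjective_hom hsurj
    exact (DFunLike.congr_fun this f).symm

lemma signAux_eq_pow {k : ℕ} (f : Equiv.Perm (Fin k)) :
    Equiv.Perm.signAux f
      = (-1) ^ (((Equiv.Perm.finPairsLT k).filter fun x => f x.1 ≤ f x.2).card) := by
  unfold Equiv.Perm.signAux
  rw [Finset.prod_ite, Finset.prod_const, Finset.prod_const_one, mul_one]

lemma finPairsLT_filter_card {k : ℕ} (p : (Σ _ : Fin k, Fin k) → Prop) [DecidablePred p] :
    ((Equiv.Perm.finPairsLT k).filter p).card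
      = ∑ a : Fin k, (Finset.univ.filter fun b => b < a ∧ p ⟨a, b⟩).card := by
  have hset : (Equiv.Perm.finPairsLT k).filter p
      = Finset.univ.sigma (fun a => Finset.univ.filter fun b => b < a ∧ p ⟨a, b⟩) := by
    ext ⟨a, b⟩
    simp only [Finset.mem_filter, Equiv.Perm.mem_finPairsLT, Finset.mem_sigma, Finset.mem_univ,
      true_and, and_comm]
  rw [hset, Finset.card_sigma]

end Sign

section Count

open Finset

variable {m n : ℕ}

lemma count_left (V : {V : Finset (Fin (m + n)) // V.card = m}) (i : Fin m) :
    (Finset.univ.filter fun b : Fin (m + n) =>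
      b < Fin.castAdd n i ∧ walkPerm V (Fin.castAdd n i) ≤ walkPerm V b).card = 0 := by
  rw [Finset.card_eq_zero, Finset.filter_eq_empty_iff]
  rintro b - ⟨h1, h2⟩
  have hb : (b : ℕ) < m := lt_trans h1 i.2
  have hbe : b = Fin.castAdd n ⟨(b : ℕ), hb⟩ := by
    apply Fin.ext; simp
  rw [hbe, walkPerm_castAdd, walkPerm_castAdd] at h2
  have := (vEnum_strictMono V).le_iff_le.mp h2
  have hlt : (⟨(b : ℕ), hb⟩ : Fin m) < i := h1
  exact absurd this (not_le.mpr hlt)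

lemma count_right (V : {V : Finset (Fin (m + n)) // V.card = m}) (j : Fin n) :
    (Finset.univ.filter fun b : Fin (m + n) =>
      b < Fin.natAdd m j ∧ walkPerm V (Fin.natAdd m j) ≤ walkPerm V b).card
      = nuConjWalk V j := by
  have h1 : nuConjWalk V j
      = (Finset.univ.filter fun i : Fin m => hEnum V j < vEnum V i).card := by
    unfold nuConjWalk
    rw [vEnum_eq, card_filter_sEnum V.1 V.2]
  rw [h1]
  refine (Finset.card_bij (fun i _ => Fin.castAdd n i) ?_ ?_ ?_).symm
  · intro i hi
    simp only [Finset.mem_filter, Finset.mem_univ, true_and] at hi ⊢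
    refine ⟨?_, ?_⟩
    · have : (i : ℕ) < m := i.2
      have : (Fin.castAdd n i : ℕ) < (Fin.natAdd m j : ℕ) := by simp; omega
      exact this
    · rw [walkPerm_castAdd, walkPerm_natAdd]
      exact hi.le
  · intro a _ b _ hab
    have : (Fin.castAdd n a) = (Fin.castAdd n b) := hab
    exact Fin.ext (by simpa using congrArg Fin.val this)
  · intro b hb
    simp only [Finset.mem_filter, Finset.mem_univ, true_and] at hb
    obtain ⟨h1', h2⟩ := hb
    have hbm : (b : ℕ) < m := by
      by_contra hge
      push_neg at hge
      have hb2 : (b : ℕ) - m < n := by have := b.2; omega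
      have hbe : b = Fin.natAdd m ⟨(b : ℕ) - m, hb2⟩ := by apply Fin.ext; simp; omega
      rw [hbe, walkPerm_natAdd, walkPerm_natAdd] at h2
      have hlt : (⟨(b : ℕ) - m, hb2⟩ : Fin n) < j := by
        have : (b : ℕ) < m + j := h1'
        simp only [Fin.lt_def]; omega
      have := (hEnum_strictMono V).le_iff_le.mp h2
      exact absurd this (not_le.mpr hlt)
    refine ⟨⟨(b : ℕ), hbm⟩, ?_, by apply Fin.ext; simp⟩
    simp only [Finset.mem_filter, Finset.mem_univ, true_and]
    have hbe : b = Fin.castAdd n ⟨(b : ℕ), hbm⟩ := by apply Fin.ext; simp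
    rw [hbe, walkPerm_castAdd, walkPerm_natAdd] at h2
    have hne : hEnum V j ≠ vEnum V ⟨(b : ℕ), hbm⟩ := (vEnum_ne_hEnum V _ _).symm
    exact lt_of_le_of_ne h2 hne

lemma walkPerm_count (V : {V : Finset (Fin (m + n)) // V.card = m}) :
    ((Equiv.Perm.finPairsLT (m + n)).filter fun x =>
        walkPerm V x.1 ≤ walkPerm V x.2).card = ∑ j, nuConjWalk V j := by
  rw [finPairsLT_filter_card]
  rw [Fin.sum_univ_add]
  have hleft : ∀ i : Fin m, (Finset.univ.filter fun b : Fin (m + n) =>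
      b < Fin.castAdd n i ∧ walkPerm V (Fin.castAdd n i) ≤ walkPerm V b).card = 0 :=
    count_left V
  have hright := count_right V
  simp only [hleft, hright, Finset.sum_const_zero, zero_add]

end Count

section Main

open Finset

variable {m n : ℕ}

lemma sum_mu_add_sum_nu (V : {V : Finset (Fin (m + n)) // V.card = m}) :
    (∑ i, muWalk V i) + (∑ j, nuConjWalk V j) = m * n := by
  have hmu : ∀ i, muWalk V i
      = (Finset.univ.filter fun j : Fin n => vEnum V i < hEnum V j).card := by
    intro i
    unfold muWalk
    rw [hEnum_eq, card_filter_sEnum V.1ᶜ (hcard V)]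
  have hnu : ∀ j, nuConjWalk V j
      = (Finset.univ.filter fun i : Fin m => hEnum V j < vEnum V i).card := by
    intro j
    unfold nuConjWalk
    rw [vEnum_eq, card_filter_sEnum V.1 V.2]
  calc (∑ i, muWalk V i) + (∑ j, nuConjWalk V j)
      = (∑ i, ∑ j, if vEnum V i < hEnum V j then 1 else 0)
        + (∑ j, ∑ i, if hEnum V j < vEnum V i then 1 else 0) := by
        congr 1
        · exact Finset.sum_congr rfl fun i _ => by rw [hmu i, Finset.card_filter]
        · exact Finset.sum_congr rfl fun j _ => by rw [hnu j, Finset.card_filter]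
    _ = ∑ i, ∑ j, ((if vEnum V i < hEnum V j then 1 else 0)
        + (if hEnum V j < vEnum V i then 1 else 0)) := by
        rw [Finset.sum_comm (f := fun j i => if hEnum V j < vEnum V i then 1 else 0)]
        rw [← Finset.sum_add_distrib]
        exact Finset.sum_congr rfl fun i _ => (Finset.sum_add_distrib).symm
    _ = ∑ _i : Fin m, ∑ _j : Fin n, 1 := by
        refine Finset.sum_congr rfl fun i _ => Finset.sum_congr rfl fun j _ => ?_
        rcases lt_trichotomy (vEnum V i) (hEnum V j) with h | h | h
        · rw [if_pos h, if_neg (not_lt.mpr h.le)]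
        · exact absurd h (vEnum_ne_hEnum V i j)
        · rw [if_neg (not_lt.mpr h.le), if_pos h]
    _ = m * n := by simp [Finset.card_univ, mul_comm]

lemma overlapSign_walkPair {lam : Fin (m + n) → ℕ} (hlam : Antitone lam)
    (V : {V : Finset (Fin (m + n)) // V.card = m}) :
    overlapSign (walkPair lam V).1 (walkPair lam V).2 lam
      = (-1 : ℤ) ^ (∑ j, nuConjWalk V j) := by
  have h : ∃ σ : Equiv.Perm (Fin (m + n)), ∀ i,
      lam i + rhoSeq (m + n) i = catSeq (walkPair lam V).1 (walkPair lam V).2 (σ i) :=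
    walkPair_isOverlap lam V
  unfold overlapSign
  rw [dif_pos h]
  have hch := sigma_unique hlam V h.choose h.choose_spec
  rw [hch, Equiv.Perm.sign_symm, sign_eq_signAux', signAux_eq_pow, walkPerm_count]
  simp

theorem walkPair_injective {lam : Fin (m + n) → ℕ} (hlam : Antitone lam) :
    Function.Injective (walkPair lam) := by
  intro V W h
  have hmu : ∀ i, muWalk V i + lam (vEnum V i) = muWalk W i + lam (vEnum W i) :=
    fun i => congrFun (congrArg Prod.fst h) i
  have hv : ∀ i, vEnum V i = vEnum W i := by
    intro i
    have h1 : fSeq lam (vEnum V i) = fSeq lam (vEnum W i) := by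
      have hV := muWalk_rho V i
      have hW := muWalk_rho W i
      simp only [fSeq]
      have := hmu i
      omega
    exact (fSeq_strictAnti hlam).injective h1
  have : V.1 = W.1 := by
    rw [s_eq_image V.1 V.2, s_eq_image W.1 W.2]
    exact Finset.image_congr fun i _ => hv i
  exact Subtype.ext this

end Main

section Range

open Finset

variable {m n : ℕ}

lemma walkPair_fst_rho (lam : Fin (m + n) → ℕ) (V : {V : Finset (Fin (m + n)) // V.card = m})
    (i : Fin m) :
    (walkPair lam V).1 i + rhoSeq m i = fSeq lam (vEnum V i) := by
  show muWalk V i + lam (vEnum V i) + rhoSeq m i = _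
  have := muWalk_rho V i
  simp only [fSeq]
  omega

lemma walkPair_snd_rho (lam : Fin (m + n) → ℕ) (V : {V : Finset (Fin (m + n)) // V.card = m})
    (j : Fin n) :
    (walkPair lam V).2 j + rhoSeq n j = fSeq lam (hEnum V j) := by
  show nuConjWalk V j + lam (hEnum V j) + rhoSeq n j = _
  have := nuConj_rho V j
  simp only [fSeq]
  omega

lemma antitone_of_rho {k : ℕ} {f : Fin k → ℕ} {F : Fin k → ℕ}
    (hF : StrictAnti F) (h : ∀ i, f i + rhoSeq k i = F i) : Antitone f := by
  match k with
  | 0 => intro i; exact i.elim0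
  | k + 1 =>
    rw [Fin.antitone_iff_succ_le]
    intro i
    have h1 : F i.succ < F i.castSucc := hF Fin.castSucc_lt_succ
    have h2 := h i.castSucc
    have h3 := h i.succ
    have hi : (i : ℕ) < k + 1 := lt_trans i.2 (Nat.lt_succ_self k)
    simp only [rhoSeq, Fin.coe_castSucc, Fin.val_succ] at h2 h3
    omega

lemma walkPair_fst_antitone {lam : Fin (m + n) → ℕ} (hlam : Antitone lam)
    (V : {V : Finset (Fin (m + n)) // V.card = m}) : Antitone (walkPair lam V).1 :=
  antitone_of_rho ((fSeq_strictAnti hlam).comp_strictMono (vEnum_strictMono V))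
    (walkPair_fst_rho lam V)

lemma walkPair_snd_antitone {lam : Fin (m + n) → ℕ} (hlam : Antitone lam)
    (V : {V : Finset (Fin (m + n)) // V.card = m}) : Antitone (walkPair lam V).2 :=
  antitone_of_rho ((fSeq_strictAnti hlam).comp_strictMono (hEnum_strictMono V))
    (walkPair_snd_rho lam V)

lemma strictMono_fin_le {k : ℕ} {f : Fin k → Fin k} (hf : StrictMono f) (i : Fin k) :
    (i : ℕ) ≤ (f i : ℕ) := by
  have hsub : (Finset.Iic i).image f ⊆ Finset.Iic (f i) := by
    intro t ht
    simp only [Finset.mem_image, Finset.mem_Iic] at ht ⊢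
    obtain ⟨a, ha, rfl⟩ := ht
    exact hf.monotone ha
  have hcard := Finset.card_le_card hsub
  rw [Finset.card_image_of_injective _ hf.injective, Fin.card_Iic, Fin.card_Iic] at hcard
  omega

lemma strictMono_fin_ge {k : ℕ} {f : Fin k → Fin k} (hf : StrictMono f) (i : Fin k) :
    (f i : ℕ) ≤ (i : ℕ) := by
  have hsub : (Finset.Ici i).image f ⊆ Finset.Ici (f i) := by
    intro t ht
    simp only [Finset.mem_image, Finset.mem_Ici] at ht ⊢
    obtain ⟨a, ha, rfl⟩ := ht
    exact hf.monotone ha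
  have hcard := Finset.card_le_card hsub
  rw [Finset.card_image_of_injective _ hf.injective, Fin.card_Ici, Fin.card_Ici] at hcard
  have h1 : (i : ℕ) < k := i.2
  have h2 : ((f i) : ℕ) < k := (f i).2
  omega

lemma strictMono_fin_id {k : ℕ} {f : Fin k → Fin k} (hf : StrictMono f) (i : Fin k) :
    f i = i :=
  Fin.ext (le_antisymm (strictMono_fin_ge hf i) (strictMono_fin_le hf i))

end Range

section Surj

open Finset

variable {m n : ℕ}

lemma card_filter_val_lt :
    ((Finset.univ : Finset (Fin (m + n))).filter fun t : Fin (m + n) => (t : ℕ) < m).card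
      = m := by
  have key : (Finset.univ : Finset (Fin m)).card
      = ((Finset.univ : Finset (Fin (m + n))).filter
          fun t : Fin (m + n) => (t : ℕ) < m).card := by
    refine Finset.card_bij (fun i _ => Fin.castAdd n i) ?_ ?_ ?_
    · intro i _
      simp only [Finset.mem_filter, Finset.mem_univ, true_and, Fin.coe_castAdd]
      exact i.2
    · intro a _ b _ hab
      exact Fin.ext (by simpa using congrArg Fin.val hab)
    · intro b hb
      simp only [Finset.mem_filter, Finset.mem_univ, true_and] at hb
      exact ⟨⟨(b : ℕ), hb⟩, Finset.mem_univ _, Fin.ext (by simp)⟩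
  rw [← key, Finset.card_univ, Fintype.card_fin]

lemma walkPair_surjective {lam : Fin (m + n) → ℕ} (hlam : Antitone lam)
    (p : (Fin m → ℕ) × (Fin n → ℕ)) (h1 : Antitone p.1) (h2 : Antitone p.2)
    (h3 : IsOverlapOf p.1 p.2 lam) : ∃ V, walkPair lam V = p := by
  obtain ⟨σ, hσ⟩ := h3
  have hcardV : ((Finset.univ : Finset (Fin (m + n))).filter
      fun t => ((σ t : Fin (m + n)) : ℕ) < m).card = m := by
    have himg : ((Finset.univ : Finset (Fin (m + n))).filter
        fun t => ((σ t : Fin (m + n)) : ℕ) < m)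
        = Finset.image σ.symm ((Finset.univ : Finset (Fin (m + n))).filter
            fun t : Fin (m + n) => (t : ℕ) < m) := by
      ext t
      simp only [Finset.mem_filter, Finset.mem_univ, true_and, Finset.mem_image]
      constructor
      · intro h; exact ⟨σ t, h, σ.symm_apply_apply t⟩
      · rintro ⟨s, hs, rfl⟩
        rwa [Equiv.apply_symm_apply]
    rw [himg, Finset.card_image_of_injective _ σ.symm.injective, card_filter_val_lt]
  set W : {V : Finset (Fin (m + n)) // V.card = m} :=
    ⟨(Finset.univ : Finset (Fin (m + n))).filter fun t => ((σ t : Fin (m + n)) : ℕ) < m,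
      hcardV⟩ with hW
  -- the first component
  have hvmem : ∀ i : Fin m, (σ (vEnum W i) : ℕ) < m := by
    intro i
    have := vEnum_mem W i
    rw [hW] at this
    exact (Finset.mem_filter.mp this).2
  have hCf : ∀ i : Fin m, fSeq lam (vEnum W i)
      = p.1 ⟨(σ (vEnum W i) : ℕ), hvmem i⟩ + rhoSeq m ⟨(σ (vEnum W i) : ℕ), hvmem i⟩ := by
    intro i
    have hc : σ (vEnum W i) = Fin.castAdd n ⟨(σ (vEnum W i) : ℕ), hvmem i⟩ := Fin.ext (by simp)
    have h0 : fSeq lam (vEnum W i) = catSeq p.1 p.2 (σ (vEnum W i)) := hσ (vEnum W i)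
    rw [h0]
    conv_lhs => rw [hc]
    exact Fin.append_left _ _ _
  have hfmono : StrictMono (fun i : Fin m => (⟨(σ (vEnum W i) : ℕ), hvmem i⟩ : Fin m)) := by
    intro a b hab
    have hA : fSeq lam (vEnum W b) < fSeq lam (vEnum W a) :=
      (fSeq_strictAnti hlam) (vEnum_strictMono W hab)
    rw [hCf a, hCf b] at hA
    exact (fSeq_strictAnti h1).lt_iff_gt.mp hA
  have hfst : ∀ i, (walkPair lam W).1 i = p.1 i := by
    intro i
    have hA := walkPair_fst_rho lam W i
    rw [hCf i, strictMono_fin_id hfmono i] at hA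
    exact Nat.add_right_cancel hA
  -- the second component
  have hhmem : ∀ j : Fin n, m ≤ (σ (hEnum W j) : ℕ) := by
    intro j
    have hc := Finset.mem_compl.mp (hEnum_mem W j)
    by_contra hlt
    push_neg at hlt
    exact hc (by rw [hW]; exact Finset.mem_filter.mpr ⟨Finset.mem_univ _, hlt⟩)
  have hgdef : ∀ j : Fin n, (σ (hEnum W j) : ℕ) - m < n := by
    intro j
    have := (σ (hEnum W j)).2
    have := hhmem j
    omega
  have hCg : ∀ j : Fin n, fSeq lam (hEnum W j)
      = p.2 ⟨(σ (hEnum W j) : ℕ) - m, hgdef j⟩ + rhoSeq n ⟨(σ (hEnum W j) : ℕ) - m, hgdef j⟩ := by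
    intro j
    have hc : σ (hEnum W j) = Fin.natAdd m ⟨(σ (hEnum W j) : ℕ) - m, hgdef j⟩ := by
      apply Fin.ext
      have := hhmem j
      simp only [Fin.natAdd_mk]
      omega
    have h0 : fSeq lam (hEnum W j) = catSeq p.1 p.2 (σ (hEnum W j)) := hσ (hEnum W j)
    rw [h0]
    conv_lhs => rw [hc]
    exact Fin.append_right _ _ _
  have hgmono : StrictMono (fun j : Fin n => (⟨(σ (hEnum W j) : ℕ) - m, hgdef j⟩ : Fin n)) := by
    intro a b hab
    have hA : fSeq lam (hEnum W b) < fSeq lam (hEnum W a) :=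
      (fSeq_strictAnti hlam) (hEnum_strictMono W hab)
    rw [hCg a, hCg b] at hA
    exact (fSeq_strictAnti h2).lt_iff_gt.mp hA
  have hsnd : ∀ j, (walkPair lam W).2 j = p.2 j := by
    intro j
    have hA := walkPair_snd_rho lam W j
    rw [hCg j, strictMono_fin_id hgmono j] at hA
    exact Nat.add_right_cancel hA
  exact ⟨W, Prod.ext (funext hfst) (funext hsnd)⟩

end Surj


/-- **Walks biject with overlapping pairs.** Fix a partition `λ` of length at
most `m + n`. The map `π ↦ (μ(π) + λ_{V(π)}, ν(π)' + λ_{H(π)})` is a bijection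
from staircase walks in an `n × m` rectangle onto the pairs of partitions whose
`(m,n)`-overlap is `λ`; moreover
`ε(μ,ν) = (-1)^{|ν(π)|} = (-1)^{mn - |μ(π)|}`. -/
theorem walks_biject_overlap_pairs (m n : ℕ) (lam : Fin (m + n) → ℕ)
    (hlam : Antitone lam) :
    Function.Injective (walkPair lam) ∧
    Set.range (walkPair lam) =
      {p : (Fin m → ℕ) × (Fin n → ℕ) | Antitone p.1 ∧ Antitone p.2 ∧ IsOverlapOf p.1 p.2 lam} ∧
    ∀ V, overlapSign (walkPair lam V).1 (walkPair lam V).2 lam =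
        (-1 : ℤ) ^ (∑ j, nuConjWalk V j) ∧
      overlapSign (walkPair lam V).1 (walkPair lam V).2 lam =
        (-1 : ℤ) ^ (m * n - ∑ i, muWalk V i) := by
  refine ⟨walkPair_injective hlam, ?_, fun V => ?_⟩
  · ext p
    constructor
    · rintro ⟨V, rfl⟩
      exact ⟨walkPair_fst_antitone hlam V, walkPair_snd_antitone hlam V, walkPair_isOverlap lam V⟩
    · rintro ⟨h1, h2, h3⟩
      exact walkPair_surjective hlam p h1 h2 h3
  · refine ⟨overlapSign_walkPair hlam V, ?_⟩
    rw [overlapSign_walkPair hlam V]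
    have hsum := sum_mu_add_sum_nu V
    congr 1
    omega
end

section
/- Let g be a unitary N×N matrix with det(−g) ≠ −1 and define the completed characteristic polynomial Λ_g(z) = det(−g)^{1/2} z^{−N/2} det(I − z g^{−1}) for z ∉ ℝ_{≤0}. Then for all such z, Λ_g(z) = Λ_{g^{−1}}(z^{−1}), and consequently z Λ_g'(z)/Λ_g(z) = − w Λ_{g^{−1}}'(w)/Λ_{g^{−1}}(w) with w = z^{−1}, whenever z is not an eigenvalue of g. -/
open Complex Matrix


private lemma detAffine_differentiable (N : ℕ) (A : Matrix (Fin N) (Fin N) ℂ) :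
    Differentiable ℂ (fun z : ℂ => Matrix.det (1 - z • A)) := by
  have h : (fun z : ℂ => Matrix.det (1 - z • A)) =
      fun z => ∑ σ : Equiv.Perm (Fin N), ((Equiv.Perm.sign σ : ℤ) : ℂ) *
        ∏ i, ((1 : Matrix (Fin N) (Fin N) ℂ) (σ i) i - z * A (σ i) i) := by
    funext z
    simp only [Matrix.det_apply', Matrix.sub_apply, Matrix.smul_apply, smul_eq_mul]
  rw [h]
  apply Differentiable.fun_sum
  intro σ _
  apply Differentiable.const_mul
  apply Differentiable.fun_finsetProd
  intro i _
  exact (differentiable_const _).sub (differentiable_id.mul_const _)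



/-- The completed characteristic polynomial
`Λ_g(z) = det(-g)^{1/2} · z^{-N/2} · det(I - z g⁻¹)` of an `N × N` matrix `g`,
using the principal branches of the complex power function. -/
noncomputable def completedCharPoly (N : ℕ) (g : Matrix (Fin N) (Fin N) ℂ) (z : ℂ) : ℂ :=
  Matrix.det (-g) ^ ((1 : ℂ) / 2) * z ^ (-(N : ℂ) / 2) * Matrix.det (1 - z • g⁻¹)

/-- **Functional equation for the completed characteristic polynomial.** For a
unitary `g` with `det(-g) ≠ -1` and all `z ∉ ℝ_{≤0}`:
`Λ_g(z) = Λ_{g⁻¹}(z⁻¹)`; consequently, whenever `z` is not an eigenvalue of `g`,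
`z Λ_g'(z)/Λ_g(z) = -w Λ_{g⁻¹}'(w)/Λ_{g⁻¹}(w)` with `w = z⁻¹`. -/
theorem completed_char_poly_functional_equation (N : ℕ)
    (g : Matrix (Fin N) (Fin N) ℂ) (hg : g ∈ Matrix.unitaryGroup (Fin N) ℂ)
    (hdet : Matrix.det (-g) ≠ -1) :
    (∀ z : ℂ, ¬(z.im = 0 ∧ z.re ≤ 0) →
      completedCharPoly N g z = completedCharPoly N g⁻¹ z⁻¹) ∧
    (∀ z : ℂ, ¬(z.im = 0 ∧ z.re ≤ 0) → z ∉ spectrum ℂ g →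
      z * deriv (completedCharPoly N g) z / completedCharPoly N g z =
        -(z⁻¹ * deriv (completedCharPoly N g⁻¹) z⁻¹ / completedCharPoly N g⁻¹ z⁻¹)) := by
  -- unitarity facts
  have hsg : star g * g = 1 := (Unitary.mem_iff.mp hg).1
  have hdet1 : (starRingEnd ℂ) g.det * g.det = 1 := by
    have h := congrArg Matrix.det hsg
    rwa [Matrix.det_mul, Matrix.det_one, Matrix.star_eq_conjTranspose,
      Matrix.det_conjTranspose] at h
  have hd0 : g.det ≠ 0 := by
    intro h; rw [h] at hdet1; simp at hdet1
  have hdg : IsUnit g.det := isUnit_iff_ne_zero.mpr hd0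
  have hnormd : Complex.normSq g.det = 1 := by
    have h := hdet1
    rw [mul_comm, Complex.mul_conj] at h
    exact_mod_cast h
  have hD : (-g).det = (-1 : ℂ)^N * g.det := by
    rw [Matrix.det_neg, Fintype.card_fin]
  have hD0 : (-g).det ≠ 0 := by
    rw [hD]; exact mul_ne_zero (pow_ne_zero _ (by norm_num)) hd0
  have hnormD : Complex.normSq (-g).det = 1 := by
    rw [hD, _root_.map_mul, _root_.map_pow]
    simp [hnormd]
  have hDarg : (-g).det.arg ≠ Real.pi := by
    intro h
    rw [Complex.arg_eq_pi_iff] at h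
    apply hdet
    have hre2 : ((-g).det.re) ^ 2 = 1 := by
      have h2 := hnormD
      rw [Complex.normSq_apply, h.2] at h2
      nlinarith
    have hre : (-g).det.re = -1 := by nlinarith [h.1]
    apply Complex.ext <;> simp [hre, h.2]
  have hgg : (g⁻¹)⁻¹ = g := Matrix.nonsing_inv_nonsing_inv g hdg
  have hdinv : (g⁻¹).det = g.det⁻¹ := by
    rw [Matrix.det_nonsing_inv, Ring.inverse_eq_inv']
  have hDinv : (-(g⁻¹)).det = ((-g).det)⁻¹ := by
    rw [Matrix.det_neg, Fintype.card_fin, hdinv, hD, mul_inv]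
    congr 1
    rw [← inv_pow, inv_neg, inv_one]
  have e0 : ((-1 : ℂ))^N * ((-1 : ℂ))^N = 1 := by
    rw [← pow_add]
    exact Even.neg_one_pow ⟨N, rfl⟩
  have hd_eq : g.det⁻¹ = (-1 : ℂ)^N * ((-g).det)⁻¹ := by
    rw [hD, mul_inv, ← mul_assoc]
    have : (-1 : ℂ)^N * ((-1 : ℂ)^N)⁻¹ = 1 := by
      rw [mul_inv_cancel₀]
      exact pow_ne_zero _ (by norm_num)
    rw [this, one_mul]
  -- Part 1
  have key : ∀ z : ℂ, ¬(z.im = 0 ∧ z.re ≤ 0) →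
      completedCharPoly N g z = completedCharPoly N g⁻¹ z⁻¹ := by
    intro z hz
    have hz0 : z ≠ 0 := by
      rintro rfl
      exact hz ⟨rfl, le_refl 0⟩
    have hzarg : z.arg ≠ Real.pi := by
      intro h
      rw [Complex.arg_eq_pi_iff] at h
      exact hz ⟨h.2, h.1.le⟩
    unfold completedCharPoly
    rw [hgg, hDinv]
    have hfac : (1 : Matrix (Fin N) (Fin N) ℂ) - z • g⁻¹ =
        ((-z) • g⁻¹) * (1 - z⁻¹ • g) := by
      rw [Matrix.mul_sub, Matrix.mul_one, Matrix.smul_mul, Matrix.mul_smul, smul_smul,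
        Matrix.nonsing_inv_mul g hdg]
      have hzz : -z * z⁻¹ = -1 := by field_simp
      rw [hzz, neg_smul, neg_smul, one_smul, sub_neg_eq_add]
      abel
    have hdetfac : (1 - z • g⁻¹).det = z^N * ((-g).det)⁻¹ * (1 - z⁻¹ • g).det := by
      rw [hfac, Matrix.det_mul, Matrix.det_smul, Fintype.card_fin, hdinv, hd_eq, neg_pow]
      calc (-1 : ℂ)^N * z^N * ((-1 : ℂ)^N * ((-g).det)⁻¹) * (1 - z⁻¹ • g).det
          = ((-1 : ℂ)^N * (-1 : ℂ)^N) * (z^N * ((-g).det)⁻¹ * (1 - z⁻¹ • g).det) := by ring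
        _ = z^N * ((-g).det)⁻¹ * (1 - z⁻¹ • g).det := by rw [e0, one_mul]
    rw [hdetfac]
    have ecpow1 : (-g).det ^ ((1:ℂ)/2) * ((-g).det)⁻¹ = ((-g).det ^ ((1:ℂ)/2))⁻¹ := by
      have h2 : (-g).det ^ ((1:ℂ)/2) * (-g).det ^ ((1:ℂ)/2) = (-g).det := by
        rw [← Complex.cpow_add _ _ hD0]
        norm_num
      have ha : (-g).det ^ ((1:ℂ)/2) ≠ 0 := by
        intro h
        rw [Complex.cpow_eq_zero_iff] at h
        exact hD0 h.1
      field_simp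
      linear_combination h2
    have ecpow2 : ((-g).det)⁻¹ ^ ((1:ℂ)/2) = ((-g).det ^ ((1:ℂ)/2))⁻¹ :=
      Complex.inv_cpow _ _ hDarg
    have hz2 : z ^ (-(N:ℂ)/2) * z ^ N = (z ^ (-(N:ℂ)/2))⁻¹ := by
      rw [← Complex.cpow_natCast, ← Complex.cpow_add _ _ hz0, ← Complex.cpow_neg]
      congr 1
      ring
    have hz3 : (z⁻¹) ^ (-(N:ℂ)/2) = (z ^ (-(N:ℂ)/2))⁻¹ :=
      Complex.inv_cpow _ _ hzarg
    calc (-g).det ^ ((1:ℂ)/2) * z ^ (-(N:ℂ)/2) * (z^N * ((-g).det)⁻¹ * (1 - z⁻¹ • g).det)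
        = ((-g).det ^ ((1:ℂ)/2) * ((-g).det)⁻¹) * (z ^ (-(N:ℂ)/2) * z^N) *
            (1 - z⁻¹ • g).det := by ring
      _ = ((-g).det ^ ((1:ℂ)/2))⁻¹ * (z ^ (-(N:ℂ)/2))⁻¹ * (1 - z⁻¹ • g).det := by
            rw [ecpow1, hz2]
      _ = ((-g).det)⁻¹ ^ ((1:ℂ)/2) * (z⁻¹) ^ (-(N:ℂ)/2) * (1 - z⁻¹ • g).det := by
            rw [ecpow2, hz3]
  refine ⟨key, ?_⟩
  -- Part 2
  intro z hz _
  have hz0 : z ≠ 0 := by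
    rintro rfl
    exact hz ⟨rfl, le_refl 0⟩
  have hU : IsOpen {w : ℂ | ¬(w.im = 0 ∧ w.re ≤ 0)} := by
    have hc : IsClosed {w : ℂ | w.im = 0 ∧ w.re ≤ 0} :=
      (isClosed_eq Complex.continuous_im continuous_const).inter
        (isClosed_le Complex.continuous_re continuous_const)
    have := hc.isOpen_compl
    rwa [Set.compl_setOf] at this
  have hmem : completedCharPoly N g =ᶠ[nhds z] (completedCharPoly N g⁻¹ ∘ Inv.inv) := by
    filter_upwards [hU.mem_nhds hz] with w hw
    exact key w hw
  have hinvmem : ¬((z⁻¹).im = 0 ∧ (z⁻¹).re ≤ 0) := by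
    rintro ⟨h1, h2⟩
    apply hz
    rw [Complex.inv_im] at h1
    rw [Complex.inv_re] at h2
    have hns : 0 < Complex.normSq z := Complex.normSq_pos.mpr hz0
    constructor
    · rcases div_eq_zero_iff.mp h1 with h | h
      · linarith [neg_eq_zero.mp h]
      · exact absurd h hns.ne'
    · by_contra hre
      push_neg at hre
      exact absurd (div_pos hre hns) (not_lt.mpr h2)
  have hslit : z⁻¹ ∈ Complex.slitPlane := by
    rw [Complex.mem_slitPlane_iff]
    by_contra h
    push_neg at h
    exact hinvmem ⟨h.2, h.1⟩
  have hdiff : DifferentiableAt ℂ (completedCharPoly N g⁻¹) z⁻¹ := by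
    have h1 : DifferentiableAt ℂ (fun w : ℂ => w ^ (-(N:ℂ)/2)) z⁻¹ :=
      ((hasDerivAt_id z⁻¹).cpow_const hslit).differentiableAt
    exact ((differentiableAt_const _).mul h1).mul ((detAffine_differentiable N _) z⁻¹)
  have hcomp : HasDerivAt (completedCharPoly N g⁻¹ ∘ Inv.inv)
      (deriv (completedCharPoly N g⁻¹) z⁻¹ * -(z^2)⁻¹) z :=
    hdiff.hasDerivAt.comp z (hasDerivAt_inv hz0)
  rw [hmem.deriv_eq, hcomp.deriv, key z hz]
  rw [div_eq_mul_inv, div_eq_mul_inv, ← neg_mul]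
  congr 1
  field_simp
end
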